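/- arXiv:1302.5176 — 12 statements merged into one kernel-verified Lean document; each statement's English description precedes it below -/
import Mathlib

section
/- Let θ₁, θ₂ ∈ ℝ and η ∈ ℂ. The determinant of the 3×3 complex matrix with rows (−4η, 1+e^{−iθ₁}, 1+e^{−iθ₁}), (1+e^{iθ₁}, −3η, e^{iθ₂}), (1+e^{iθ₁}, e^{−iθ₂}, −3η) equals −4·(9η³ − η − (cos θ₁ + 1)(3η + cos θ₂)). -/
/-- The determinant of the coefficient matrix of the linear system for the vertex
values (A,B,C) in the Floquet–Bloch eigenvalue problem on the graphyne quantum graph. -/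
theorem graphyne_vertex_matrix_det (θ₁ θ₂ : ℝ) (η : ℂ) :
    Matrix.det
      !![-4 * η, 1 + Complex.exp (-(Complex.I * θ₁)), 1 + Complex.exp (-(Complex.I * θ₁));
         1 + Complex.exp (Complex.I * θ₁), -3 * η, Complex.exp (Complex.I * θ₂);
         1 + Complex.exp (Complex.I * θ₁), Complex.exp (-(Complex.I * θ₂)), -3 * η] =
      -4 * (9 * η ^ 3 - η - ((Real.cos θ₁ : ℂ) + 1) * (3 * η + (Real.cos θ₂ : ℂ))) := by
  rw [Matrix.det_fin_three]
  norm_num [Matrix.cons_val_zero, Matrix.cons_val_one, Matrix.head_cons, Matrix.cons_val_two,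
    Matrix.tail_cons, Matrix.vecHead, Matrix.vecTail]
  rw [Complex.cos, Complex.cos,
    Complex.exp_neg (Complex.I * θ₁), Complex.exp_neg (Complex.I * θ₂)]
  have h1 : Complex.exp (Complex.I * θ₁) ≠ 0 := Complex.exp_ne_zero _
  have h2 : Complex.exp (Complex.I * θ₂) ≠ 0 := Complex.exp_ne_zero _
  have e1 : (θ₁ : ℂ) * Complex.I = Complex.I * θ₁ := by ring
  have e2 : (θ₂ : ℂ) * Complex.I = Complex.I * θ₂ := by ring
  rw [e1, e2]
  simp only [neg_mul, e1, e2, Complex.exp_neg]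
  field_simp
  ring
end

section
/- For every a ∈ [0,2] and b ∈ [−1,1] there exist real numbers r₁, r₂, r₃ with −1 ≤ r₁ ≤ −1/3 ≤ r₂ ≤ 1/3 ≤ r₃ ≤ 1 such that 9x³ − x − a(3x + b) = 9(x − r₁)(x − r₂)(x − r₃) for all real x. In particular, all three roots of the cubic 9x³ − x = a(3x + b) are real, and there is one root in each of the intervals [−1,−1/3], [−1/3,1/3], [1/3,1]. -/
/-- For a ∈ [0,2], b ∈ [−1,1], the cubic 9x³ − x − a(3x+b) has three real roots,
one in each of the intervals [−1,−1/3], [−1/3,1/3], [1/3,1]. -/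
theorem graphyne_cubic_three_real_roots (a b : ℝ)
    (ha : a ∈ Set.Icc (0 : ℝ) 2) (hb : b ∈ Set.Icc (-1 : ℝ) 1) :
    ∃ r₁ r₂ r₃ : ℝ,
      -1 ≤ r₁ ∧ r₁ ≤ -(1/3) ∧ -(1/3) ≤ r₂ ∧ r₂ ≤ 1/3 ∧ 1/3 ≤ r₃ ∧ r₃ ≤ 1 ∧
      ∀ x : ℝ, 9 * x ^ 3 - x - a * (3 * x + b) = 9 * (x - r₁) * (x - r₂) * (x - r₃) := by
  obtain ⟨ha0, ha2⟩ := ha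
  obtain ⟨hbm, hbp⟩ := hb
  set f : ℝ → ℝ := fun x => 9 * x ^ 3 - x - a * (3 * x + b) with hf
  have hfc : Continuous f := by fun_prop
  have hm1 : f (-1) ≤ 0 := by simp only [hf]; nlinarith
  have hm13 : 0 ≤ f (-(1/3)) := by simp only [hf]; nlinarith
  have h13 : f (1/3) ≤ 0 := by simp only [hf]; nlinarith
  have hp1 : 0 ≤ f 1 := by simp only [hf]; nlinarith
  obtain ⟨x₁, hx₁mem, hx₁⟩ :=
    intermediate_value_Icc (by norm_num : (-1:ℝ) ≤ -(1/3)) hfc.continuousOn ⟨hm1, hm13⟩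
  obtain ⟨x₃, hx₃mem, hx₃⟩ :=
    intermediate_value_Icc (by norm_num : (1/3:ℝ) ≤ 1) hfc.continuousOn ⟨h13, hp1⟩
  set S : Set ℝ := {x | x ∈ Set.Icc (-1:ℝ) 1 ∧ f x = 0} with hS
  have hScomp : IsCompact S := by
    have hSeq : S = Set.Icc (-1:ℝ) 1 ∩ f ⁻¹' {0} := by ext x; simp [hS]
    rw [hSeq]
    exact isCompact_Icc.inter_right (isClosed_singleton.preimage hfc)
  have hx₁S : x₁ ∈ S := ⟨⟨hx₁mem.1, by linarith [hx₁mem.2]⟩, hx₁⟩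
  have hx₃S : x₃ ∈ S := ⟨⟨by linarith [hx₃mem.1], hx₃mem.2⟩, hx₃⟩
  have hSne : S.Nonempty := ⟨x₁, hx₁S⟩
  set r₁ : ℝ := sInf S with hr₁def
  set r₃ : ℝ := sSup S with hr₃def
  have hr₁S : r₁ ∈ S := hScomp.sInf_mem hSne
  have hr₃S : r₃ ∈ S := hScomp.sSup_mem hSne
  have hr₁le : r₁ ≤ x₁ := csInf_le hScomp.bddBelow hx₁S
  have hr₃ge : x₃ ≤ r₃ := le_csSup hScomp.bddAbove hx₃S
  have hr₁m1 : -1 ≤ r₁ := hr₁S.1.1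
  have hr₁13 : r₁ ≤ -(1/3) := le_trans hr₁le hx₁mem.2
  have hr₃13 : (1/3:ℝ) ≤ r₃ := le_trans hx₃mem.1 hr₃ge
  have hr₃1 : r₃ ≤ 1 := hr₃S.1.2
  set r₂ : ℝ := -(r₁ + r₃) with hr₂def
  have hfr₁ : f r₁ = 0 := hr₁S.2
  have hfr₃ : f r₃ = 0 := hr₃S.2
  have hd : r₁ - r₃ ≠ 0 := by intro h; linarith [sub_eq_zero.mp h]
  have key : ∀ x : ℝ, f x = 9 * (x - r₁) * (x - r₂) * (x - r₃) := by
    intro x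
    have h1 : 9 * r₁ ^ 3 - r₁ - a * (3 * r₁ + b) = 0 := hfr₁
    have h3 : 9 * r₃ ^ 3 - r₃ - a * (3 * r₃ + b) = 0 := hfr₃
    have hmul : (r₁ - r₃) * (f x - 9 * (x - r₁) * (x - r₂) * (x - r₃)) = 0 := by
      simp only [hf, hr₂def]
      linear_combination (x - r₃) * h1 - (x - r₁) * h3
    rcases mul_eq_zero.mp hmul with h | h
    · exact absurd h hd
    · linarith [h]
  have hfr₂ : f r₂ = 0 := by rw [key r₂]; ring
  have hr₂S : r₂ ∈ S := ⟨⟨by linarith, by linarith⟩, hfr₂⟩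
  have hr₂le₃ : r₂ ≤ r₃ := le_csSup hScomp.bddAbove hr₂S
  have hr₂ge₁ : r₁ ≤ r₂ := csInf_le hScomp.bddBelow hr₂S
  have h13' : (9:ℝ) * (1/3 - r₁) * (1/3 - r₂) * (1/3 - r₃) ≤ 0 := by
    rw [← key (1/3)]; exact h13
  have hm13' : (0:ℝ) ≤ 9 * (-(1/3) - r₁) * (-(1/3) - r₂) * (-(1/3) - r₃) := by
    rw [← key (-(1/3))]; exact hm13
  have hr₂13 : r₂ ≤ 1/3 := by
    by_contra h
    push_neg at h
    nlinarith [mul_pos (show (0:ℝ) < 1/3 - r₁ by linarith)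
      (show (0:ℝ) < r₂ - 1/3 by linarith), hr₂le₃]
  have hr₂m13 : -(1/3) ≤ r₂ := by
    by_contra h
    push_neg at h
    nlinarith [mul_pos (show (0:ℝ) < -(1/3) - r₂ by linarith)
      (show (0:ℝ) < r₃ - (-(1/3)) by linarith), hr₂ge₁]
  exact ⟨r₁, r₂, r₃, hr₁m1, hr₁13, hr₂m13, hr₂13, hr₃13, hr₃1, key⟩
end

section
/- For every y ∈ [−1,1] there exist θ₁, θ₂ ∈ [−π,π] such that 9y³ − y = (cos θ₁ + 1)(3y + cos θ₂). That is, as (θ₁,θ₂) ranges over the Brillouin zone, the roots of the dispersion cubic cover the whole interval [−1,1]. -/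
open Real

/-- Every y ∈ [−1,1] is a root of the dispersion cubic for some quasimomentum
(θ₁,θ₂) in the Brillouin zone [−π,π]². -/
theorem graphyne_cubic_roots_cover (y : ℝ) (hy : y ∈ Set.Icc (-1 : ℝ) 1) :
    ∃ θ₁ ∈ Set.Icc (-π) π, ∃ θ₂ ∈ Set.Icc (-π) π,
      9 * y ^ 3 - y = (Real.cos θ₁ + 1) * (3 * y + Real.cos θ₂) := by
  obtain ⟨h1, h2⟩ := hy
  have hπ : (0:ℝ) ≤ π := Real.pi_pos.le
  rcases le_or_gt y (-1/3) with h | h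
  · refine ⟨Real.arccos (3*y^2 + y - 1),
      ⟨le_trans (by linarith) (Real.arccos_nonneg _), Real.arccos_le_pi _⟩,
      π, ⟨by linarith, le_refl _⟩, ?_⟩
    rw [Real.cos_arccos (by nlinarith) (by nlinarith), Real.cos_pi]
    ring
  rcases le_or_gt (1/3) y with h' | h'
  · refine ⟨Real.arccos (3*y^2 - y - 1),
      ⟨le_trans (by linarith) (Real.arccos_nonneg _), Real.arccos_le_pi _⟩,
      0, ⟨by linarith, hπ⟩, ?_⟩
    rw [Real.cos_arccos (by nlinarith) (by nlinarith), Real.cos_zero]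
    ring
  · refine ⟨0, ⟨by linarith, hπ⟩,
      Real.arccos ((9*y^3 - 7*y)/2),
      ⟨le_trans (by linarith) (Real.arccos_nonneg _), Real.arccos_le_pi _⟩, ?_⟩
    have hA : (0:ℝ) ≤ (1-3*y)*(2-3*y)*(y+1) :=
      mul_nonneg (mul_nonneg (by linarith) (by linarith)) (by linarith)
    have hB : (0:ℝ) ≤ (3*y+1)*(3*y+2)*(1-y) :=
      mul_nonneg (mul_nonneg (by linarith) (by linarith)) (by linarith)
    rw [Real.cos_arccos (by nlinarith) (by nlinarith), Real.cos_zero]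
    ring
end

section
/- Let a ∈ [0,2] and b ∈ [−1,1]. Then every real root x of 9x³ − x = a(3x + b) satisfies x ≤ 1/3 if and only if either a = 0, or (b = −1 and a ≤ 2/3). Consequently, the largest root F₃ attains its minimal value 1/3 exactly at quasimomenta (±π, θ₂) with θ₂ ∈ [−π,π] and (θ₁, ±π) with θ₁ ∈ [−π,−θ₀] ∪ [θ₀,π], where θ₀ = arccos(−1/3). -/
open Real

lemma cos_eq_neg_one_iff' {θ : ℝ} (h : θ ∈ Set.Icc (-π) π) :
    Real.cos θ = -1 ↔ (θ = π ∨ θ = -π) := by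
  constructor
  · intro hc
    have habs : |θ| ≤ π := abs_le.2 ⟨h.1, h.2⟩
    have h1 : Real.arccos (Real.cos |θ|) = |θ| :=
      Real.arccos_cos (abs_nonneg θ) habs
    rw [Real.cos_abs, hc, Real.arccos_neg_one] at h1
    rcases abs_eq (le_of_lt Real.pi_pos) |>.1 h1.symm with h' | h'
    · exact Or.inl h'
    · exact Or.inr h'
  · rintro (rfl | rfl) <;> simp

lemma cos_le_neg_third_iff {θ : ℝ} (h : θ ∈ Set.Icc (-π) π) :
    Real.cos θ ≤ -(1/3) ↔ Real.arccos (-(1/3)) ≤ |θ| := by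
  have habs : |θ| ≤ π := abs_le.2 ⟨h.1, h.2⟩
  have hca : Real.cos (Real.arccos (-(1/3))) = -(1/3) :=
    Real.cos_arccos (by norm_num) (by norm_num)
  constructor
  · intro hc
    by_contra hlt
    push_neg at hlt
    have h1 : Real.cos (Real.arccos (-(1/3))) ≤ Real.cos |θ| :=
      Real.cos_le_cos_of_nonneg_of_le_pi (abs_nonneg θ)
        (Real.arccos_le_pi _) (le_of_lt hlt)
    rw [Real.cos_abs, hca] at h1
    have hceq : Real.cos θ = -(1/3) := le_antisymm hc h1
    have h2 : Real.arccos (Real.cos |θ|) = |θ| :=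
      Real.arccos_cos (abs_nonneg θ) habs
    rw [Real.cos_abs, hceq] at h2
    linarith
  · intro hle
    have h1 : Real.cos |θ| ≤ Real.cos (Real.arccos (-(1/3))) :=
      Real.cos_le_cos_of_nonneg_of_le_pi (Real.arccos_nonneg _) habs hle
    rw [Real.cos_abs, hca] at h1
    exact h1

/-- Every real root of 9x³ − x = a(3x+b) is ≤ 1/3 iff a = 0 or (b = −1 and a ≤ 2/3);
consequently the largest root F₃ attains its minimum 1/3 exactly at quasimomenta
(±π,θ₂), θ₂ ∈ [−π,π], and (θ₁,±π), θ₁ ∈ [−π,−θ₀] ∪ [θ₀,π], where θ₀ = arccos(−1/3). -/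
theorem graphyne_F3_min :
    (∀ a b : ℝ, a ∈ Set.Icc (0 : ℝ) 2 → b ∈ Set.Icc (-1 : ℝ) 1 →
      ((∀ x : ℝ, 9 * x ^ 3 - x = a * (3 * x + b) → x ≤ 1/3) ↔
        (a = 0 ∨ (b = -1 ∧ a ≤ 2/3)))) ∧
    (∀ θ₁ θ₂ : ℝ, θ₁ ∈ Set.Icc (-π) π → θ₂ ∈ Set.Icc (-π) π →
      ((∀ x : ℝ, 9 * x ^ 3 - x = (Real.cos θ₁ + 1) * (3 * x + Real.cos θ₂) → x ≤ 1/3) ↔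
        ((θ₁ = π ∨ θ₁ = -π) ∨
          ((θ₂ = π ∨ θ₂ = -π) ∧
            θ₁ ∈ Set.Icc (-π) (-(Real.arccos (-(1/3)))) ∪ Set.Icc (Real.arccos (-(1/3))) π)))) := by
  have key : ∀ a b : ℝ, a ∈ Set.Icc (0 : ℝ) 2 → b ∈ Set.Icc (-1 : ℝ) 1 →
      ((∀ x : ℝ, 9 * x ^ 3 - x = a * (3 * x + b) → x ≤ 1/3) ↔
        (a = 0 ∨ (b = -1 ∧ a ≤ 2/3))) := by
    rintro a b ⟨ha0, ha2⟩ ⟨hb1, hb2⟩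
    constructor
    · intro h
      by_contra hc
      push_neg at hc
      obtain ⟨ha, hbc⟩ := hc
      have ha' : 0 < a := lt_of_le_of_ne ha0 (Ne.symm ha)
      rcases lt_or_eq_of_le hb1 with hb | hb
      · -- b > -1 : IVT gives a root > 1/3
        set f : ℝ → ℝ := fun x => 9 * x ^ 3 - x - a * (3 * x + b) with hf
        have hcont : ContinuousOn f (Set.Icc (1/3 : ℝ) 2) := by
          apply Continuous.continuousOn; fun_prop
        have h13 : f (1/3) < 0 := by
          simp only [hf]
          nlinarith
        have h2pos : 0 < f 2 := by
          simp only [hf]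
          nlinarith
        have hsub := intermediate_value_Icc (by norm_num : (1/3:ℝ) ≤ 2) hcont
        have hmem : (0:ℝ) ∈ Set.Icc (f (1/3)) (f 2) := ⟨le_of_lt h13, le_of_lt h2pos⟩
        obtain ⟨x, hx, hfx⟩ := hsub hmem
        have hxr : 9 * x ^ 3 - x = a * (3 * x + b) := by
          have : 9 * x ^ 3 - x - a * (3 * x + b) = 0 := hfx
          linarith
        have hxle := h x hxr
        have hxeq : x = 1/3 := le_antisymm hxle hx.1
        rw [hxeq] at hfx
        rw [hfx] at h13
        exact lt_irrefl 0 h13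
      · -- b = -1, a > 2/3
        have ha23 : 2/3 < a := hbc hb.symm
        set s : ℝ := Real.sqrt (1 + 12 * a) with hs
        have hs2 : s ^ 2 = 1 + 12 * a := Real.sq_sqrt (by linarith)
        have hs0 : 0 ≤ s := Real.sqrt_nonneg _
        have hs3 : 3 < s := by nlinarith
        set r : ℝ := (s - 1) / 6 with hr
        have hquad : 3 * r ^ 2 + r - a = 0 := by
          simp only [hr]
          field_simp
          nlinarith
        have hroot : 9 * r ^ 3 - r = a * (3 * r + b) := by
          rw [← hb]
          nlinarith [hquad]
        have hrgt : 1/3 < r := by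
          simp only [hr]; linarith
        have := h r hroot
        linarith
    · rintro (rfl | ⟨rfl, ha23⟩) <;> intro x hx
      · by_contra h'
        push_neg at h'
        nlinarith [hx, mul_pos (mul_pos (show (0:ℝ) < x by linarith) (show (0:ℝ) < 3*x-1 by linarith)) (show (0:ℝ) < 3*x+1 by linarith)]
      · by_contra h'
        push_neg at h'
        nlinarith [hx, sq_nonneg (x - 1/3), mul_pos (by linarith : (0:ℝ) < 3*x - 1) (by nlinarith : (0:ℝ) < 3 * x ^ 2 + x - a)]
  refine ⟨key, ?_⟩
  intro θ₁ θ₂ h1 h2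
  have ha : Real.cos θ₁ + 1 ∈ Set.Icc (0:ℝ) 2 :=
    ⟨by linarith [Real.neg_one_le_cos θ₁], by linarith [Real.cos_le_one θ₁]⟩
  have hb : Real.cos θ₂ ∈ Set.Icc (-1:ℝ) 1 := ⟨Real.neg_one_le_cos θ₂, Real.cos_le_one θ₂⟩
  rw [key _ _ ha hb]
  have e1 : Real.cos θ₁ + 1 = 0 ↔ (θ₁ = π ∨ θ₁ = -π) := by
    rw [← cos_eq_neg_one_iff' h1]
    constructor <;> intro h <;> linarith
  have e2 : Real.cos θ₂ = -1 ↔ (θ₂ = π ∨ θ₂ = -π) := cos_eq_neg_one_iff' h2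
  have e3 : Real.cos θ₁ + 1 ≤ 2/3 ↔
      θ₁ ∈ Set.Icc (-π) (-(Real.arccos (-(1/3)))) ∪ Set.Icc (Real.arccos (-(1/3))) π := by
    have : Real.cos θ₁ + 1 ≤ 2/3 ↔ Real.cos θ₁ ≤ -(1/3) := by constructor <;> intro h <;> linarith
    rw [this, cos_le_neg_third_iff h1]
    rw [le_abs]
    constructor
    · rintro (h | h)
      · exact Or.inr ⟨h, h1.2⟩
      · exact Or.inl ⟨h1.1, by linarith⟩
    · rintro (⟨_, h⟩ | ⟨h, _⟩)
      · exact Or.inr (by linarith)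
      · exact Or.inl h
  rw [e1, e2, e3]
end

section
/- Let a ∈ [0,2] and b ∈ [−1,1]. Then every real root x of 9x³ − x = a(3x + b) satisfies x ≥ −1/3 if and only if either a = 0, or (b = 1 and a ≤ 2/3). Consequently, the smallest root F₁ attains its maximal value −1/3 exactly at quasimomenta (±π, θ₂) with θ₂ ∈ [−π,π] and (θ₁, 0) with θ₁ ∈ [−π,−θ₀] ∪ [θ₀,π], where θ₀ = arccos(−1/3). -/
open Real

lemma cos_le_iff_aux {t c : ℝ} (ht0 : 0 ≤ t) (htp : t ≤ π) (hc1 : -1 ≤ c) (hc2 : c ≤ 1) :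
    cos t ≤ c ↔ arccos c ≤ t := by
  have h := Real.strictAntiOn_cos.le_iff_ge (a := t) (b := arccos c)
    ⟨ht0, htp⟩ ⟨Real.arccos_nonneg c, Real.arccos_le_pi c⟩
  rw [Real.cos_arccos hc1 hc2] at h
  exact h

lemma le_cos_iff_aux {t c : ℝ} (ht0 : 0 ≤ t) (htp : t ≤ π) (hc1 : -1 ≤ c) (hc2 : c ≤ 1) :
    c ≤ cos t ↔ t ≤ arccos c := by
  have h := Real.strictAntiOn_cos.le_iff_ge (a := arccos c) (b := t)
    ⟨Real.arccos_nonneg c, Real.arccos_le_pi c⟩ ⟨ht0, htp⟩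
  rw [Real.cos_arccos hc1 hc2] at h
  exact h

lemma cubic_root_iff (a b : ℝ) (ha : a ∈ Set.Icc (0 : ℝ) 2) (hb : b ∈ Set.Icc (-1 : ℝ) 1) :
    (∀ x : ℝ, 9 * x ^ 3 - x = a * (3 * x + b) → -(1/3) ≤ x) ↔
      (a = 0 ∨ (b = 1 ∧ a ≤ 2/3)) := by
  obtain ⟨ha0, ha2⟩ := ha
  obtain ⟨hb1, hb2⟩ := hb
  constructor
  · intro h
    by_contra hc
    push_neg at hc
    obtain ⟨hane, himp⟩ := hc
    have hapos : 0 < a := lt_of_le_of_ne ha0 (Ne.symm hane)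
    by_cases hb : b = 1
    · -- b = 1 and a > 2/3 : explicit root (1 - √(1+12a))/6 < -1/3
      subst hb
      have ha23 : 2/3 < a := himp rfl
      set s := Real.sqrt (1 + 12 * a) with hs
      have hs2 : s ^ 2 = 1 + 12 * a := Real.sq_sqrt (by linarith)
      have hs3 : 3 < s := by
        nlinarith [Real.sqrt_nonneg (1 + 12 * a), hs2]
      set x := (1 - s) / 6 with hxdef
      have hroot : 9 * x ^ 3 - x = a * (3 * x + 1) := by
        have : x = (1 - s) / 6 := rfl
        field_simp [this]
        rw [this]; linear_combination ((3 * ((1 - s) / 6) + 1) / 12) * hs2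
      have := h x hroot
      have : x < -(1/3) := by
        rw [hxdef]; linarith
      linarith [h x hroot]
    · -- a > 0, b < 1 : IVT gives a root in [-2, -1/3) 
      have hblt : b < 1 := lt_of_le_of_ne hb2 hb
      set f : ℝ → ℝ := fun x => 9 * x ^ 3 - x - a * (3 * x + b) with hf
      have hcont : ContinuousOn f (Set.Icc (-2 : ℝ) (-(1/3))) := by
        apply Continuous.continuousOn; fun_prop
      have hf2 : f (-2) < 0 := by
        simp only [hf]; nlinarith
      have hf13 : 0 < f (-(1/3)) := by
        simp only [hf]; nlinarith
      have hmem : (0 : ℝ) ∈ Set.Icc (f (-2)) (f (-(1/3))) := ⟨le_of_lt hf2, le_of_lt hf13⟩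
      obtain ⟨x, hx, hfx⟩ := intermediate_value_Icc (by norm_num) hcont hmem
      have hroot : 9 * x ^ 3 - x = a * (3 * x + b) := by
        have : f x = 0 := hfx
        simp only [hf] at this; linarith
      have h1 := h x hroot
      have hxeq : x = -(1/3) := le_antisymm hx.2 h1
      rw [hxeq] at hfx
      rw [hfx] at hf13
      exact lt_irrefl 0 hf13
  · rintro (rfl | ⟨rfl, ha23⟩) x hx
    · by_contra hlt
      push_neg at hlt
      have h9 : (0:ℝ) < 9 * x ^ 2 - 1 := by nlinarith
      nlinarith [mul_pos (show (0:ℝ) < -x by linarith) h9]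
    · by_contra hlt
      push_neg at hlt
      nlinarith [sq_nonneg (3 * x + 1), sq_nonneg x]

/-- Every real root of 9x³ − x = a(3x+b) is ≥ −1/3 iff a = 0 or (b = 1 and a ≤ 2/3);
consequently the smallest root F₁ attains its maximum −1/3 exactly at quasimomenta
(±π,θ₂), θ₂ ∈ [−π,π], and (θ₁,0), θ₁ ∈ [−π,−θ₀] ∪ [θ₀,π], where θ₀ = arccos(−1/3). -/
theorem graphyne_F1_max :
    (∀ a b : ℝ, a ∈ Set.Icc (0 : ℝ) 2 → b ∈ Set.Icc (-1 : ℝ) 1 →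
      ((∀ x : ℝ, 9 * x ^ 3 - x = a * (3 * x + b) → -(1/3) ≤ x) ↔
        (a = 0 ∨ (b = 1 ∧ a ≤ 2/3)))) ∧
    (∀ θ₁ θ₂ : ℝ, θ₁ ∈ Set.Icc (-π) π → θ₂ ∈ Set.Icc (-π) π →
      ((∀ x : ℝ, 9 * x ^ 3 - x = (Real.cos θ₁ + 1) * (3 * x + Real.cos θ₂) → -(1/3) ≤ x) ↔
        ((θ₁ = π ∨ θ₁ = -π) ∨
          (θ₂ = 0 ∧
            θ₁ ∈ Set.Icc (-π) (-(Real.arccos (-(1/3)))) ∪ Set.Icc (Real.arccos (-(1/3))) π)))) := by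
  constructor
  · exact cubic_root_iff
  · intro θ₁ θ₂ h1 h2
    obtain ⟨h1a, h1b⟩ := h1
    obtain ⟨h2a, h2b⟩ := h2
    have hc1 : Real.cos θ₁ + 1 ∈ Set.Icc (0 : ℝ) 2 :=
      ⟨by linarith [Real.neg_one_le_cos θ₁], by linarith [Real.cos_le_one θ₁]⟩
    have hc2 : Real.cos θ₂ ∈ Set.Icc (-1 : ℝ) 1 :=
      ⟨Real.neg_one_le_cos θ₂, Real.cos_le_one θ₂⟩
    rw [cubic_root_iff _ _ hc1 hc2]
    have habs1 : |θ₁| ≤ π := abs_le.mpr ⟨h1a, h1b⟩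
    have habs2 : |θ₂| ≤ π := abs_le.mpr ⟨h2a, h2b⟩
    constructor
    · rintro (h | ⟨hcb, hle⟩)
      · left
        have : Real.cos θ₁ = -1 := by linarith
        have h' : Real.cos |θ₁| ≤ -1 := by rw [Real.cos_abs]; linarith
        rw [cos_le_iff_aux (abs_nonneg θ₁) habs1 (by norm_num) (by norm_num),
          Real.arccos_neg_one] at h'
        have : |θ₁| = π := le_antisymm habs1 h'
        rcases abs_eq (le_of_lt Real.pi_pos) |>.mp this with h | h
        · exact Or.inl h
        · exact Or.inr h
      · right
        constructor
        · have h' : (1 : ℝ) ≤ Real.cos |θ₂| := by rw [Real.cos_abs]; linarith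
          rw [le_cos_iff_aux (abs_nonneg θ₂) habs2 (by norm_num) (by norm_num),
            Real.arccos_one] at h'
          exact abs_nonpos_iff.mp h'
        · have h' : Real.cos |θ₁| ≤ -(1/3) := by rw [Real.cos_abs]; linarith
          rw [cos_le_iff_aux (abs_nonneg θ₁) habs1 (by norm_num) (by norm_num)] at h'
          rcases abs_cases θ₁ with ⟨he, _⟩ | ⟨he, _⟩
          · right; exact ⟨by linarith [he ▸ h'], h1b⟩
          · left; exact ⟨h1a, by rw [he] at h'; linarith⟩
    · rintro (h | ⟨rfl, hmem⟩)
      · left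
        have hpi : Real.cos θ₁ = -1 := by
          rcases h with rfl | rfl
          · exact Real.cos_pi
          · rw [Real.cos_neg]; exact Real.cos_pi
        linarith
      · right
        refine ⟨Real.cos_zero, ?_⟩
        have h' : arccos (-(1/3)) ≤ |θ₁| := by
          rcases hmem with ⟨hl, hr⟩ | ⟨hl, hr⟩
          · rcases abs_cases θ₁ with ⟨he, _⟩ | ⟨he, _⟩
            · have := Real.arccos_nonneg (-(1/3)); linarith
            · rw [he]; linarith
          · rcases abs_cases θ₁ with ⟨he, _⟩ | ⟨he, hneg⟩
            · rw [he]; linarith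
            · have := Real.arccos_nonneg (-(1/3)); linarith
        rw [← cos_le_iff_aux (abs_nonneg θ₁) habs1 (by norm_num) (by norm_num)] at h'
        rw [Real.cos_abs] at h'
        linarith
end

section
/- Let a ∈ [0,2], b ∈ [−1,1], and let p(x) = 9x³ − x − a(3x + b). Then p has a repeated real root (i.e., there exists x₀ with p(x₀) = 0 and p'(x₀) = 0) if and only if (a,b) = (2/3, 1) or (a,b) = (2/3, −1); in the first case the repeated root is x₀ = −1/3 and in the second case it is x₀ = 1/3. In terms of quasimomenta, two branches of the dispersion cubic meet exactly at θ = (±θ₀, 0) (value −1/3) and θ = (±θ₀, ±π) (value 1/3), where θ₀ = arccos(−1/3). -/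
open Real

lemma deriv_cubic (a b x : ℝ) :
    deriv (fun x : ℝ => 9 * x ^ 3 - x - a * (3 * x + b)) x = 27 * x ^ 2 - 1 - 3 * a := by
  have h : HasDerivAt (fun x : ℝ => 9 * x ^ 3 - x - a * (3 * x + b))
      (9 * (↑3 * x ^ (3 - 1)) - 1 - a * (3 * 1)) x := by
    exact (((hasDerivAt_pow 3 x).const_mul 9).sub (hasDerivAt_id x)).sub
      ((((hasDerivAt_id x).const_mul 3).add_const b).const_mul a)
  have := h.deriv
  rw [this]; norm_num; ring

lemma key (a b x : ℝ) (ha0 : 0 ≤ a) (ha2 : a ≤ 2) (hb1 : -1 ≤ b) (hb2 : b ≤ 1)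
    (h1 : 9 * x ^ 3 - x - a * (3 * x + b) = 0) (h2 : 27 * x ^ 2 - 1 - 3 * a = 0) :
    a = 2/3 ∧ ((x = 1/3 ∧ b = -1) ∨ (x = -(1/3) ∧ b = 1)) := by
  have h3 : 54 * x ^ 3 + b * (27 * x ^ 2 - 1) = 0 := by
    linear_combination (-3) * h1 + (3 * x + b) * h2
  have h4 : (54 * x ^ 3) ^ 2 = b ^ 2 * (27 * x ^ 2 - 1) ^ 2 := by
    linear_combination (54 * x ^ 3 - b * (27 * x ^ 2 - 1)) * h3
  have hu : 1 / 27 ≤ x ^ 2 := by nlinarith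
  have hb2' : b ^ 2 ≤ 1 := by nlinarith
  have hsq : (54 * x ^ 3) ^ 2 ≤ (27 * x ^ 2 - 1) ^ 2 := by nlinarith [sq_nonneg (27 * x ^ 2 - 1)]
  have h5 : (x ^ 2 - 1/9) ^ 2 * (x ^ 2 - 1/36) ≤ 0 := by nlinarith
  have h6 : (x ^ 2 - 1/9) ^ 2 = 0 := by
    have := sq_nonneg (x ^ 2 - 1/9)
    nlinarith
  have hx2 : x ^ 2 = 1/9 := by
    have := sq_eq_zero_iff.mp h6; linarith
  have hA : a = 2/3 := by nlinarith
  refine ⟨hA, ?_⟩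
  have hcases : (x - 1/3) * (x + 1/3) = 0 := by linear_combination hx2
  rcases mul_eq_zero.mp hcases with h | h
  · left; constructor
    · linarith
    · have hx : x = 1/3 := by linarith
      subst hx; nlinarith
  · right; constructor
    · linarith
    · have hx : x = -(1/3) := by linarith
      subst hx; nlinarith


lemma cos_eq_one_iff_Icc {θ : ℝ} (h1 : -π ≤ θ) (h2 : θ ≤ π) : Real.cos θ = 1 ↔ θ = 0 := by
  constructor
  · intro h
    rcases (Real.cos_eq_one_iff θ).1 h with ⟨n, hn⟩
    have hpi := Real.pi_pos
    have hn0 : n = 0 := by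
      rcases lt_trichotomy n 0 with hlt | heq | hgt
      · exfalso
        have : (n : ℝ) ≤ -1 := by exact_mod_cast (by omega : n ≤ -1)
        nlinarith
      · exact heq
      · exfalso
        have : (1 : ℝ) ≤ (n : ℝ) := by exact_mod_cast hgt
        nlinarith
    rw [hn0] at hn; simpa using hn.symm
  · intro h; rw [h, Real.cos_zero]

lemma cos_eq_neg_one_iff_Icc {θ : ℝ} (h1 : -π ≤ θ) (h2 : θ ≤ π) :
    Real.cos θ = -1 ↔ θ = π ∨ θ = -π := by
  constructor
  · intro h
    have hs : Real.sin θ = 0 := by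
      have := Real.sin_sq_add_cos_sq θ
      nlinarith
    rcases Real.sin_eq_zero_iff.1 hs with ⟨n, hn⟩
    have hpi := Real.pi_pos
    have hn' : n = 1 ∨ n = 0 ∨ n = -1 := by
      rcases lt_trichotomy n 0 with hlt | heq | hgt
      · right; right
        by_contra hne
        have : (n : ℝ) ≤ -2 := by exact_mod_cast (by omega : n ≤ -2)
        nlinarith
      · right; left; exact heq
      · left
        by_contra hne
        have : (2 : ℝ) ≤ (n : ℝ) := by exact_mod_cast (by omega : 2 ≤ n)
        nlinarith
    rcases hn' with rfl | rfl | rfl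
    · left; simpa using hn.symm
    · exfalso; rw [← hn] at h; simp at h; nlinarith [h]
    · right; rw [← hn]; push_cast; ring
  · rintro (rfl | rfl)
    · exact Real.cos_pi
    · rw [Real.cos_neg, Real.cos_pi]

lemma cos_eq_third_iff_Icc {θ : ℝ} (h1 : -π ≤ θ) (h2 : θ ≤ π) :
    Real.cos θ = -(1/3) ↔ θ = Real.arccos (-(1/3)) ∨ θ = -Real.arccos (-(1/3)) := by
  constructor
  · intro h
    rcases le_or_gt 0 θ with hθ | hθ
    · left; rw [← h, Real.arccos_cos hθ h2]
    · right
      have hc : Real.cos (-θ) = -(1/3) := by rw [Real.cos_neg]; exact h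
      have : Real.arccos (-(1/3)) = -θ := by
        rw [← hc, Real.arccos_cos (by linarith) (by linarith)]
      linarith
  · rintro (rfl | rfl)
    · exact Real.cos_arccos (by norm_num) (by norm_num)
    · rw [Real.cos_neg]; exact Real.cos_arccos (by norm_num) (by norm_num)


lemma exists_iff (a b : ℝ) (ha0 : 0 ≤ a) (ha2 : a ≤ 2) (hb1 : -1 ≤ b) (hb2 : b ≤ 1) :
    (∃ x₀ : ℝ, 9 * x₀ ^ 3 - x₀ - a * (3 * x₀ + b) = 0 ∧
      deriv (fun x : ℝ => 9 * x ^ 3 - x - a * (3 * x + b)) x₀ = 0) ↔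
    ((a = 2/3 ∧ b = 1) ∨ (a = 2/3 ∧ b = -1)) := by
  constructor
  · rintro ⟨x₀, h1, h2⟩
    rw [deriv_cubic] at h2
    rcases key a b x₀ ha0 ha2 hb1 hb2 h1 h2 with ⟨hA, ⟨_, hB⟩ | ⟨_, hB⟩⟩
    · right; exact ⟨hA, hB⟩
    · left; exact ⟨hA, hB⟩
  · rintro (⟨rfl, rfl⟩ | ⟨rfl, rfl⟩)
    · exact ⟨-(1/3), by norm_num, by rw [deriv_cubic]; norm_num⟩
    · exact ⟨1/3, by norm_num, by rw [deriv_cubic]; norm_num⟩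

/-- The cubic p(x) = 9x³ − x − a(3x+b) has a repeated real root iff
(a,b) = (2/3,1) (repeated root −1/3) or (a,b) = (2/3,−1) (repeated root 1/3);
in quasimomenta, exactly at θ = (±θ₀,0) and θ = (±θ₀,±π), θ₀ = arccos(−1/3). -/
theorem graphyne_cubic_repeated_root :
    (∀ a b : ℝ, a ∈ Set.Icc (0 : ℝ) 2 → b ∈ Set.Icc (-1 : ℝ) 1 →
      (((∃ x₀ : ℝ, 9 * x₀ ^ 3 - x₀ - a * (3 * x₀ + b) = 0 ∧
          deriv (fun x : ℝ => 9 * x ^ 3 - x - a * (3 * x + b)) x₀ = 0) ↔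
        ((a = 2/3 ∧ b = 1) ∨ (a = 2/3 ∧ b = -1))) ∧
      (∀ x₀ : ℝ, 9 * x₀ ^ 3 - x₀ - a * (3 * x₀ + b) = 0 →
        deriv (fun x : ℝ => 9 * x ^ 3 - x - a * (3 * x + b)) x₀ = 0 →
        ((a = 2/3 ∧ b = 1) → x₀ = -(1/3)) ∧ ((a = 2/3 ∧ b = -1) → x₀ = 1/3)))) ∧
    (∀ θ₁ θ₂ : ℝ, θ₁ ∈ Set.Icc (-π) π → θ₂ ∈ Set.Icc (-π) π →
      ((∃ x₀ : ℝ, 9 * x₀ ^ 3 - x₀ - (Real.cos θ₁ + 1) * (3 * x₀ + Real.cos θ₂) = 0 ∧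
          deriv (fun x : ℝ =>
            9 * x ^ 3 - x - (Real.cos θ₁ + 1) * (3 * x + Real.cos θ₂)) x₀ = 0) ↔
        (((θ₁ = Real.arccos (-(1/3)) ∨ θ₁ = -Real.arccos (-(1/3))) ∧ θ₂ = 0) ∨
         ((θ₁ = Real.arccos (-(1/3)) ∨ θ₁ = -Real.arccos (-(1/3))) ∧ (θ₂ = π ∨ θ₂ = -π))))) := by
  constructor
  · intro a b ha hb
    obtain ⟨ha0, ha2⟩ := ha
    obtain ⟨hb1, hb2⟩ := hb
    refine ⟨exists_iff a b ha0 ha2 hb1 hb2, ?_⟩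
    intro x₀ h1 h2
    rw [deriv_cubic] at h2
    rcases key a b x₀ ha0 ha2 hb1 hb2 h1 h2 with ⟨hA, ⟨hx, hB⟩ | ⟨hx, hB⟩⟩
    · exact ⟨fun h => absurd (h.2.symm.trans hB) (by norm_num), fun _ => hx⟩
    · exact ⟨fun _ => hx, fun h => absurd (h.2.symm.trans hB) (by norm_num)⟩
  · intro θ₁ θ₂ hθ1 hθ2
    obtain ⟨h1l, h1r⟩ := hθ1
    obtain ⟨h2l, h2r⟩ := hθ2
    rw [exists_iff (Real.cos θ₁ + 1) (Real.cos θ₂)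
      (by nlinarith [Real.neg_one_le_cos θ₁]) (by nlinarith [Real.cos_le_one θ₁])
      (Real.neg_one_le_cos θ₂) (Real.cos_le_one θ₂)]
    constructor
    · rintro (⟨hA, hB⟩ | ⟨hA, hB⟩)
      · exact Or.inl ⟨(cos_eq_third_iff_Icc h1l h1r).1 (by linarith),
          (cos_eq_one_iff_Icc h2l h2r).1 hB⟩
      · exact Or.inr ⟨(cos_eq_third_iff_Icc h1l h1r).1 (by linarith),
          (cos_eq_neg_one_iff_Icc h2l h2r).1 hB⟩
    · rintro (⟨hA, hB⟩ | ⟨hA, hB⟩)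
      · refine Or.inl ⟨?_, ?_⟩
        · have := (cos_eq_third_iff_Icc h1l h1r).2 hA; linarith
        · exact (cos_eq_one_iff_Icc h2l h2r).2 hB
      · refine Or.inr ⟨?_, ?_⟩
        · have := (cos_eq_third_iff_Icc h1l h1r).2 hA; linarith
        · exact (cos_eq_neg_one_iff_Icc h2l h2r).2 hB
end

section
/- Let p₁, p₂ ∈ ℤ, not both zero, k₀ ∈ ℤ, and c ∈ ℝ. Suppose the line L = {(θ₁,θ₂) ∈ ℝ² : p₁θ₁ + p₂θ₂ = 2k₀π} meets the open square (−π,π)², and that 9c³ − c = (cos θ₁ + 1)(3c + cos θ₂) holds for every (θ₁,θ₂) ∈ L ∩ [−π,π]². Then p₁ = 0, and setting t = 2k₀π/p₂ one has either (t = 0 and c = −1/3) or (t = π/2 or t = −π/2, and c = 0). In particular c ∈ {0, 1/3, −1/3}, and the only linear level sets of the root function meeting the interior of the Brillouin zone are the horizontal lines θ₂ = 0 and θ₂ = ±π/2. -/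
open Real

private lemma analyticAt_ccos (z : ℂ) : AnalyticAt ℂ Complex.cos z := by
  have h : AnalyticAt ℂ (fun w : ℂ =>
      (Complex.exp (w * Complex.I) + Complex.exp (-w * Complex.I)) / 2) z := by
    apply AnalyticAt.div
    · exact ((analyticAt_cexp.comp ((analyticAt_id).mul analyticAt_const))).add
        ((analyticAt_cexp.comp ((analyticAt_id.neg).mul analyticAt_const)))
    · exact analyticAt_const
    · norm_num
  exact h

private lemma analyticAt_rcos (x : ℝ) : AnalyticAt ℝ Real.cos x := by
  have h1 : AnalyticAt ℝ (fun t : ℝ => Complex.cos (Complex.ofRealCLM t)) x :=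
    ((analyticAt_ccos _).restrictScalars).comp (Complex.ofRealCLM.analyticAt x)
  have h2 : AnalyticAt ℝ (fun t : ℝ => Complex.reCLM (Complex.cos (Complex.ofRealCLM t))) x :=
    (Complex.reCLM.analyticAt _).comp h1
  have : (fun t : ℝ => Complex.reCLM (Complex.cos (Complex.ofRealCLM t))) = Real.cos := by
    funext t
    exact Complex.cos_ofReal_re t
  rwa [this] at h2

private lemma neg_one_lt_cos' {x : ℝ} (h1 : -π < x) (h2 : x < π) : -1 < Real.cos x := by
  rcases lt_or_ge (-1) (Real.cos x) with h | h
  · exact h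
  · exfalso
    have hc : Real.cos x = -1 := le_antisymm h (Real.neg_one_le_cos x)
    have hs : Real.sin x = 0 := by
      have := Real.sin_sq_add_cos_sq x
      nlinarith
    have := (Real.sin_eq_zero_iff_of_lt_of_lt h1 h2).mp hs
    rw [this] at hc
    norm_num at hc

/-- Classification of linear level sets of the root function of the dispersion cubic
that meet the interior of the Brillouin zone: only the horizontal lines θ₂ = 0
(with constant branch c = −1/3) and θ₂ = ±π/2 (with constant branch c = 0). -/
theorem graphyne_linear_level_sets (p₁ p₂ k₀ : ℤ) (hp : ¬(p₁ = 0 ∧ p₂ = 0)) (c : ℝ)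
    (hmeet : ∃ θ₁ θ₂ : ℝ, θ₁ ∈ Set.Ioo (-π) π ∧ θ₂ ∈ Set.Ioo (-π) π ∧
      (p₁ : ℝ) * θ₁ + (p₂ : ℝ) * θ₂ = 2 * (k₀ : ℝ) * π)
    (heq : ∀ θ₁ θ₂ : ℝ, θ₁ ∈ Set.Icc (-π) π → θ₂ ∈ Set.Icc (-π) π →
      (p₁ : ℝ) * θ₁ + (p₂ : ℝ) * θ₂ = 2 * (k₀ : ℝ) * π →
      9 * c ^ 3 - c = (Real.cos θ₁ + 1) * (3 * c + Real.cos θ₂)) :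
    p₁ = 0 ∧
    ((2 * (k₀ : ℝ) * π / (p₂ : ℝ) = 0 ∧ c = -(1/3)) ∨
      ((2 * (k₀ : ℝ) * π / (p₂ : ℝ) = π/2 ∨ 2 * (k₀ : ℝ) * π / (p₂ : ℝ) = -(π/2)) ∧ c = 0)) ∧
    (c = 0 ∨ c = 1/3 ∨ c = -(1/3)) := by
  obtain ⟨a, b, ha, hb, hab⟩ := hmeet
  have hπ := Real.pi_pos
  have haa : |a| < π := abs_lt.mpr ⟨ha.1, ha.2⟩
  have hbb : |b| < π := abs_lt.mpr ⟨hb.1, hb.2⟩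
  -- Main claim: p₁ = 0
  have key : p₁ = 0 := by
    by_contra hq
    have hq' : (p₁ : ℝ) ≠ 0 := Int.cast_ne_zero.mpr hq
    set δ : ℝ := min ((π - |a|)/(|(p₂:ℝ)| + 1)) ((π - |b|)/(|(p₁:ℝ)| + 1)) with hδdef
    have hδ : 0 < δ := lt_min (div_pos (by linarith) (by positivity))
      (div_pos (by linarith) (by positivity))
    set f : ℝ → ℝ :=
      fun t => (Real.cos (a + (p₂:ℝ)*t) + 1) * (3*c + Real.cos (b - (p₁:ℝ)*t)) with hfdef
    set K : ℝ := 9*c^3 - c with hKdef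
    have hf : ∀ t ∈ Set.Ioo (-δ) δ, f t = K := by
      intro t ht
      have htabs : |t| ≤ δ := le_of_lt (abs_lt.mpr ⟨ht.1, ht.2⟩)
      have h1 : |(p₂:ℝ)*t| ≤ π - |a| := by
        rw [abs_mul]
        calc |(p₂:ℝ)| * |t| ≤ |(p₂:ℝ)| * ((π - |a|)/(|(p₂:ℝ)| + 1)) := by
              apply mul_le_mul_of_nonneg_left _ (abs_nonneg _)
              exact le_trans htabs (min_le_left _ _)
          _ ≤ π - |a| := by
              rw [div_eq_mul_inv]
              have h0 : (0:ℝ) < |(p₂:ℝ)| + 1 := by positivity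
              rw [mul_comm, mul_assoc]
              have : |(p₂:ℝ)| * (|(p₂:ℝ)| + 1)⁻¹ ≤ 1 := by
                rw [mul_inv_le_iff₀ h0]; linarith
              nlinarith [abs_nonneg a, haa]
      have h2 : |(p₁:ℝ)*t| ≤ π - |b| := by
        rw [abs_mul]
        calc |(p₁:ℝ)| * |t| ≤ |(p₁:ℝ)| * ((π - |b|)/(|(p₁:ℝ)| + 1)) := by
              apply mul_le_mul_of_nonneg_left _ (abs_nonneg _)
              exact le_trans htabs (min_le_right _ _)
          _ ≤ π - |b| := by
              rw [div_eq_mul_inv]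
              have h0 : (0:ℝ) < |(p₁:ℝ)| + 1 := by positivity
              rw [mul_comm, mul_assoc]
              have : |(p₁:ℝ)| * (|(p₁:ℝ)| + 1)⁻¹ ≤ 1 := by
                rw [mul_inv_le_iff₀ h0]; linarith
              nlinarith [abs_nonneg b, hbb]
      have m1 : a + (p₂:ℝ)*t ∈ Set.Icc (-π) π := by
        have h1' := abs_le.mp h1
        exact ⟨by linarith [neg_abs_le a, h1'.1], by linarith [le_abs_self a, h1'.2]⟩
      have m2 : b - (p₁:ℝ)*t ∈ Set.Icc (-π) π := by
        have h2' := abs_le.mp h2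
        exact ⟨by linarith [neg_abs_le b, h2'.2], by linarith [le_abs_self b, h2'.1]⟩
      have hline : (p₁:ℝ) * (a + (p₂:ℝ)*t) + (p₂:ℝ) * (b - (p₁:ℝ)*t) = 2 * (k₀:ℝ) * π := by
        linear_combination hab
      have := heq _ _ m1 m2 hline
      simp only [hfdef, hKdef]
      linarith
    have hfa : AnalyticOnNhd ℝ f Set.univ := by
      intro x _
      apply AnalyticAt.mul
      · exact ((analyticAt_rcos _).comp
          (analyticAt_const.add (analyticAt_const.mul analyticAt_id))).add analyticAt_const
      · exact analyticAt_const.add ((analyticAt_rcos _).comp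
          (analyticAt_const.sub (analyticAt_const.mul analyticAt_id)))
    have hKa : AnalyticOnNhd ℝ (fun _ : ℝ => K) Set.univ := fun x _ => analyticAt_const
    have hglob : ∀ t : ℝ, f t = K := by
      have hmem : Set.Ioo (-δ) δ ∈ nhds (0:ℝ) := Ioo_mem_nhds (by linarith) hδ
      have hev : f =ᶠ[nhds (0:ℝ)] (fun _ => K) := Filter.eventuallyEq_of_mem hmem hf
      have := hfa.eqOn_of_preconnected_of_eventuallyEq hKa isPreconnected_univ
        (Set.mem_univ (0:ℝ)) hev
      exact fun t => this (Set.mem_univ t)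
    by_cases hp2 : (p₂:ℝ) = 0
    · -- vertical-ish line: cos θ₁ constant, θ₂ varies
      have e1 := hglob (b/(p₁:ℝ))
      have e2 := hglob ((b-π)/(p₁:ℝ))
      simp only [hfdef, hp2, zero_mul, add_zero] at e1 e2
      have hb0 : b - (p₁:ℝ)*(b/(p₁:ℝ)) = 0 := by field_simp; ring
      have hbπ : b - (p₁:ℝ)*((b-π)/(p₁:ℝ)) = π := by field_simp; ring
      rw [hb0, Real.cos_zero] at e1
      rw [hbπ, Real.cos_pi] at e2
      have hca : -1 < Real.cos a := neg_one_lt_cos' ha.1 ha.2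
      nlinarith [e1, e2]
    · -- both p₁, p₂ nonzero
      have hK0 : K = 0 := by
        have hu : a + (p₂:ℝ)*((π - a)/(p₂:ℝ)) = π := by field_simp; ring
        have e := hglob ((π - a)/(p₂:ℝ))
        simp only [hfdef] at e
        rw [hu, Real.cos_pi] at e
        linarith
      set g : ℝ → ℝ := fun t => 3*c + Real.cos (b - (p₁:ℝ)*t) with hgdef
      have hga : AnalyticOnNhd ℝ g Set.univ := fun x _ =>
        analyticAt_const.add ((analyticAt_rcos _).comp
          (analyticAt_const.sub (analyticAt_const.mul analyticAt_id)))
      set t₀ : ℝ := -a/(p₂:ℝ) with ht₀def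
      have hu0 : a + (p₂:ℝ)*t₀ = 0 := by rw [ht₀def]; field_simp; ring
      have hcont : Continuous (fun t : ℝ => Real.cos (a + (p₂:ℝ)*t) + 1) :=
        (Real.continuous_cos.comp (continuous_const.add (continuous_const.mul
          continuous_id))).add continuous_const
      have hU : {t : ℝ | 0 < Real.cos (a + (p₂:ℝ)*t) + 1} ∈ nhds t₀ := by
        apply (isOpen_lt continuous_const hcont).mem_nhds
        show (0:ℝ) < Real.cos (a + (p₂:ℝ)*t₀) + 1
        rw [hu0, Real.cos_zero]
        norm_num
      have hgev : g =ᶠ[nhds t₀] (fun _ => (0:ℝ)) := by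
        filter_upwards [hU] with t ht
        have hft := hglob t
        rw [hK0] at hft
        simp only [hfdef] at hft
        have := mul_eq_zero.mp hft
        rcases this with h | h
        · exact absurd h (ne_of_gt ht)
        · exact h
      have hg0 : ∀ t : ℝ, g t = 0 := by
        have := hga.eqOn_of_preconnected_of_eventuallyEq (fun x _ => analyticAt_const)
          isPreconnected_univ (Set.mem_univ t₀) hgev
        exact fun t => this (Set.mem_univ t)
      have e1 := hg0 (b/(p₁:ℝ))
      have e2 := hg0 ((b-π)/(p₁:ℝ))
      have hb0 : b - (p₁:ℝ)*(b/(p₁:ℝ)) = 0 := by field_simp; ring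
      have hbπ : b - (p₁:ℝ)*((b-π)/(p₁:ℝ)) = π := by field_simp; ring
      simp only [hgdef] at e1 e2
      rw [hb0, Real.cos_zero] at e1
      rw [hbπ, Real.cos_pi] at e2
      linarith
  -- Now p₁ = 0
  have hp2 : p₂ ≠ 0 := fun h => hp ⟨key, h⟩
  have hp2' : (p₂ : ℝ) ≠ 0 := Int.cast_ne_zero.mpr hp2
  have hkey' : (p₁ : ℝ) = 0 := by exact_mod_cast congrArg (Int.cast : ℤ → ℝ) key
  have hb2 : (p₂:ℝ) * b = 2 * (k₀:ℝ) * π := by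
    rw [hkey'] at hab; linarith
  have ht : 2 * (k₀:ℝ) * π / (p₂:ℝ) = b := by
    field_simp
    linarith
  -- evaluate at (π, b) and (0, b)
  have hline1 : (p₁:ℝ) * π + (p₂:ℝ) * b = 2 * (k₀:ℝ) * π := by rw [hkey']; linarith
  have hline2 : (p₁:ℝ) * 0 + (p₂:ℝ) * b = 2 * (k₀:ℝ) * π := by rw [hkey']; linarith
  have hbIcc : b ∈ Set.Icc (-π) π := ⟨le_of_lt hb.1, le_of_lt hb.2⟩
  have h1 := heq π b ⟨by linarith, le_refl π⟩ hbIcc hline1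
  have h2 := heq 0 b ⟨by linarith, le_of_lt hπ⟩ hbIcc hline2
  rw [Real.cos_pi] at h1
  rw [Real.cos_zero] at h2
  have h9 : 9 * c ^ 3 - c = 0 := by linarith
  have hcosb : Real.cos b = -(3*c) := by nlinarith [h2, h9]
  have hfac : c * ((3*c - 1) * (3*c + 1)) = 0 := by linear_combination h9
  rcases mul_eq_zero.mp hfac with hc0 | hrest
  · -- c = 0 : cos b = 0, b = ±π/2
    have hcb : Real.cos b = 0 := by rw [hcosb, hc0]; ring
    obtain ⟨n, hn⟩ := Real.cos_eq_zero_iff.mp hcb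
    have hn1 : -π < (2*(n:ℝ)+1) * π / 2 := by rw [← hn]; exact hb.1
    have hn2 : (2*(n:ℝ)+1) * π / 2 < π := by rw [← hn]; exact hb.2
    have hnlb : (-2:ℝ) < 2*(n:ℝ)+1 := by nlinarith
    have hnub : (2*(n:ℝ)+1) < 2 := by nlinarith
    have hnl : (-2:ℤ) < 2*n+1 := by exact_mod_cast hnlb
    have hnu : (2*n+1 : ℤ) < 2 := by exact_mod_cast hnub
    have : n = 0 ∨ n = -1 := by omega
    refine ⟨key, Or.inr ⟨?_, hc0⟩, Or.inl hc0⟩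
    rw [ht]
    rcases this with h | h
    · left; rw [hn, h]; push_cast; ring
    · right; rw [hn, h]; push_cast; ring
  · rcases mul_eq_zero.mp hrest with hc1 | hc2
    · -- c = 1/3 : cos b = -1, impossible
      exfalso
      have hc : c = 1/3 := by linarith
      have : Real.cos b = -1 := by rw [hcosb, hc]; norm_num
      have := neg_one_lt_cos' hb.1 hb.2
      linarith
    · -- c = -1/3 : cos b = 1, b = 0
      have hc : c = -(1/3) := by linarith
      have hcb : Real.cos b = 1 := by rw [hcosb, hc]; norm_num
      have hb0 : b = 0 := by
        have := (Real.cos_eq_one_iff_of_lt_of_lt (x := b) (by linarith [hb.1]) (by linarith [hb.2])).mp hcb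
        exact this
      refine ⟨key, Or.inl ⟨?_, hc⟩, Or.inr (Or.inr hc)⟩
      rw [ht, hb0]
end

section
/- Let k ∈ ℕ, λ₀ = (2(k+1)π)², and define f : ℝ³ → ℝ by f(θ₁,θ₂,λ) = 9cos³(√λ) − cos(√λ) − (cos θ₁ + 1)(3cos(√λ) + cos θ₂), where √λ denotes Real.sqrt λ. Then at the point P = (0, 0, λ₀): f(P) = 0; all three first partial derivatives of f vanish at P; and the second partial derivatives at P are ∂²f/∂θ₁² = 4, ∂²f/∂θ₂² = 2, ∂²f/∂λ² = −5/λ₀, with all mixed second partials ∂²f/∂θ₁∂θ₂ = ∂²f/∂θ₁∂λ = ∂²f/∂θ₂∂λ = 0. Hence the Hessian of f at P is the indefinite nondegenerate matrix diag(4, 2, −5/λ₀), so the zero set of f has a conical (Dirac) singularity at P. -/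
open Real

/-- The free dispersion function of the graphyne quantum graph,
f(θ₁,θ₂,λ) = 9cos³(√λ) − cos(√λ) − (cos θ₁ + 1)(3cos(√λ) + cos θ₂). -/
noncomputable def graphyneDispersion (θ₁ θ₂ l : ℝ) : ℝ :=
  9 * (Real.cos (Real.sqrt l)) ^ 3 - Real.cos (Real.sqrt l) -
    (Real.cos θ₁ + 1) * (3 * Real.cos (Real.sqrt l) + Real.cos θ₂)

lemma hasDerivAt_cos_sqrt {l : ℝ} (hl : 0 < l) :
    HasDerivAt (fun t => Real.cos (Real.sqrt t))
      (-Real.sin (Real.sqrt l) * (1 / (2 * Real.sqrt l))) l :=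
  (Real.hasDerivAt_cos _).comp l (Real.hasDerivAt_sqrt hl.ne')

lemma hasDerivAt_sin_sqrt {l : ℝ} (hl : 0 < l) :
    HasDerivAt (fun t => Real.sin (Real.sqrt t))
      (Real.cos (Real.sqrt l) * (1 / (2 * Real.sqrt l))) l :=
  (Real.hasDerivAt_sin _).comp l (Real.hasDerivAt_sqrt hl.ne')

/-- The first radial derivative of the dispersion function along `θ₁ = θ₂ = 0`. -/
noncomputable def graphyneD1 (t : ℝ) : ℝ :=
  (27 * (Real.cos (Real.sqrt t)) ^ 2 - 7) *
    (-Real.sin (Real.sqrt t) * (1 / (2 * Real.sqrt t)))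

lemma hasDerivAt_graphyneG {l : ℝ} (hl : 0 < l) :
    HasDerivAt (fun t => 9 * (Real.cos (Real.sqrt t)) ^ 3 - 7 * Real.cos (Real.sqrt t) - 2)
      (graphyneD1 l) l := by
  have hc := hasDerivAt_cos_sqrt hl
  have h := (((hc.pow 3).const_mul 9).sub (hc.const_mul 7)).sub_const 2
  refine h.congr_deriv ?_
  unfold graphyneD1
  push_cast
  ring

/-- At P = (0,0,(2(k+1)π)²) the free dispersion function vanishes together with its
gradient, and its Hessian is the indefinite nondegenerate matrix diag(4, 2, −5/lam0):
a conical (Dirac) singularity of the Bloch variety. -/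
theorem graphyne_dirac_point_D_eq_two (k : ℕ) (lam0 : ℝ)
    (hlam0 : lam0 = (2 * ((k : ℝ) + 1) * π) ^ 2) :
    graphyneDispersion 0 0 lam0 = 0 ∧
    deriv (fun x => graphyneDispersion x 0 lam0) 0 = 0 ∧
    deriv (fun y => graphyneDispersion 0 y lam0) 0 = 0 ∧
    deriv (fun l => graphyneDispersion 0 0 l) lam0 = 0 ∧
    deriv (deriv (fun x => graphyneDispersion x 0 lam0)) 0 = 4 ∧
    deriv (deriv (fun y => graphyneDispersion 0 y lam0)) 0 = 2 ∧
    deriv (deriv (fun l => graphyneDispersion 0 0 l)) lam0 = -5 / lam0 ∧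
    deriv (fun y => deriv (fun x => graphyneDispersion x y lam0) 0) 0 = 0 ∧
    deriv (fun l => deriv (fun x => graphyneDispersion x 0 l) 0) lam0 = 0 ∧
    deriv (fun l => deriv (fun y => graphyneDispersion 0 y l) 0) lam0 = 0 ∧
    Matrix.det (Matrix.diagonal ![(4 : ℝ), 2, -5 / lam0]) ≠ 0 ∧
    -5 / lam0 < 0 := by
  set s0 : ℝ := 2 * ((k : ℝ) + 1) * π with hs0
  have hs0pos : 0 < s0 := by
    have : (0:ℝ) < (k : ℝ) + 1 := by positivity
    have := Real.pi_pos
    positivity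
  have hpos : 0 < lam0 := by rw [hlam0]; positivity
  have hsq : Real.sqrt lam0 = s0 := by rw [hlam0]; exact Real.sqrt_sq hs0pos.le
  have hcos1 : Real.cos s0 = 1 := by
    have h : s0 = ((k + 1 : ℕ) : ℝ) * (2 * π) := by rw [hs0]; push_cast; ring
    rw [h, Real.cos_nat_mul_two_pi]
  have hsin0 : Real.sin s0 = 0 := by
    have h : s0 = ((2 * (k + 1) : ℕ) : ℝ) * π := by rw [hs0]; push_cast; ring
    rw [h, Real.sin_nat_mul_pi]
  -- second x-derivative helper: derivative of x ↦ f x 0 lam0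
  have hdx : ∀ (y l : ℝ) (x : ℝ),
      HasDerivAt (fun x => graphyneDispersion x y l)
        (Real.sin x * (3 * Real.cos (Real.sqrt l) + Real.cos y)) x := by
    intro y l x
    unfold graphyneDispersion
    have h := (((Real.hasDerivAt_cos x).add_const 1).mul_const
        (3 * Real.cos (Real.sqrt l) + Real.cos y)).const_sub
        (9 * (Real.cos (Real.sqrt l)) ^ 3 - Real.cos (Real.sqrt l))
    refine h.congr_deriv ?_
    ring
  have hdy : ∀ (x l : ℝ) (y : ℝ),
      HasDerivAt (fun y => graphyneDispersion x y l)
        ((Real.cos x + 1) * Real.sin y) y := by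
    intro x l y
    unfold graphyneDispersion
    have h := (((Real.hasDerivAt_cos y).const_add
        (3 * Real.cos (Real.sqrt l))).const_mul (Real.cos x + 1)).const_sub
        (9 * (Real.cos (Real.sqrt l)) ^ 3 - Real.cos (Real.sqrt l))
    refine h.congr_deriv ?_
    ring
  -- the radial function
  have hfun : (fun l => graphyneDispersion 0 0 l) =
      fun t => 9 * (Real.cos (Real.sqrt t)) ^ 3 - 7 * Real.cos (Real.sqrt t) - 2 := by
    funext t
    unfold graphyneDispersion
    rw [Real.cos_zero]
    ring
  have hgderiv : deriv (fun l => graphyneDispersion 0 0 l) =ᶠ[nhds lam0] graphyneD1 := by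
    filter_upwards [eventually_gt_nhds hpos] with l hl
    rw [hfun]
    exact (hasDerivAt_graphyneG hl).deriv
  have hD1val : graphyneD1 lam0 = 0 := by
    unfold graphyneD1; rw [hsq, hsin0]; ring
  -- derivative of graphyneD1 at lam0
  have hs0ne : s0 ≠ 0 := hs0pos.ne'
  have hc0 : HasDerivAt (fun t => Real.cos (Real.sqrt t)) 0 lam0 := by
    have h := hasDerivAt_cos_sqrt hpos
    rw [hsq, hsin0] at h
    simpa using h
  have hA : HasDerivAt (fun t => 27 * (Real.cos (Real.sqrt t)) ^ 2 - 7) 0 lam0 := by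
    have h := ((hc0.pow 2).const_mul 27).sub_const 7
    simpa using h
  have hinv : HasDerivAt (fun t => 1 / (2 * Real.sqrt t))
      (-(2 * (1 / (2 * s0))) / (2 * s0) ^ 2) lam0 := by
    have h := ((Real.hasDerivAt_sqrt hpos.ne').const_mul 2).inv
      (by rw [hsq]; positivity)
    rw [hsq] at h
    simpa [one_div, Pi.inv_def] using h
  have hB : HasDerivAt (fun t => -Real.sin (Real.sqrt t) * (1 / (2 * Real.sqrt t)))
      (-(Real.cos s0 * (1 / (2 * s0))) * (1 / (2 * s0)) +
        -Real.sin s0 * (-(2 * (1 / (2 * s0))) / (2 * s0) ^ 2)) lam0 := by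
    have hs := (hasDerivAt_sin_sqrt hpos).neg
    rw [hsq] at hs
    have h := hs.mul hinv
    rw [hsq] at h
    refine h.congr_deriv ?_
    simp only [Pi.neg_apply, hsq]
  have hD1 : HasDerivAt graphyneD1 (-5 / lam0) lam0 := by
    have h := hA.mul hB
    unfold graphyneD1
    refine h.congr_deriv ?_
    rw [hsq, hsin0, hcos1, hlam0]
    field_simp
    ring
  refine ⟨?_, ?_, ?_, ?_, ?_, ?_, ?_, ?_, ?_, ?_, ?_, ?_⟩
  · unfold graphyneDispersion
    rw [hsq, hcos1, Real.cos_zero]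
    ring
  · have h := (hdx 0 lam0 0).deriv
    rw [h, Real.sin_zero]; ring
  · have h := (hdy 0 lam0 0).deriv
    rw [h, Real.sin_zero]; ring
  · rw [hfun]
    rw [(hasDerivAt_graphyneG hpos).deriv, hD1val]
  · have h : deriv (fun x => graphyneDispersion x 0 lam0) =
        fun x => Real.sin x * (3 * Real.cos (Real.sqrt lam0) + Real.cos 0) := by
      funext x; exact (hdx 0 lam0 x).deriv
    rw [h]
    have h2 := ((Real.hasDerivAt_sin 0).mul_const
        (3 * Real.cos (Real.sqrt lam0) + Real.cos 0)).deriv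
    rw [h2, hsq, hcos1, Real.cos_zero]
    ring
  · have h : deriv (fun y => graphyneDispersion 0 y lam0) =
        fun y => (Real.cos 0 + 1) * Real.sin y := by
      funext y; exact (hdy 0 lam0 y).deriv
    rw [h]
    have h2 := ((Real.hasDerivAt_sin 0).const_mul (Real.cos 0 + 1)).deriv
    rw [h2, Real.cos_zero]
    ring
  · rw [hgderiv.deriv_eq]
    exact hD1.deriv
  · have h : (fun y => deriv (fun x => graphyneDispersion x y lam0) 0) = fun _ => (0:ℝ) := by
      funext y
      rw [(hdx y lam0 0).deriv, Real.sin_zero]; ring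
    rw [h, deriv_const]
  · have h : (fun l => deriv (fun x => graphyneDispersion x 0 l) 0) = fun _ => (0:ℝ) := by
      funext l
      rw [(hdx 0 l 0).deriv, Real.sin_zero]; ring
    rw [h, deriv_const]
  · have h : (fun l => deriv (fun y => graphyneDispersion 0 y l) 0) = fun _ => (0:ℝ) := by
      funext l
      rw [(hdy 0 l 0).deriv, Real.sin_zero]; ring
    rw [h, deriv_const]
  · rw [Matrix.det_diagonal]
    simp [Fin.prod_univ_succ]
    intro h
    exact absurd h hpos.ne'
  · exact div_neg_of_neg_of_pos (by norm_num) hpos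
end

section
/- Let k ∈ ℕ, λ₀ = ((2k+1)π)², and define f : ℝ³ → ℝ by f(θ₁,θ₂,λ) = 9cos³(√λ) − cos(√λ) − (cos θ₁ + 1)(3cos(√λ) + cos θ₂), where √λ denotes Real.sqrt λ. Then at the point P = (0, π, λ₀): f(P) = 0; all three first partial derivatives of f vanish at P; and the second partial derivatives at P are ∂²f/∂θ₁² = −4, ∂²f/∂θ₂² = −2, ∂²f/∂λ² = 5/λ₀, with all mixed second partials equal to 0. Hence the Hessian of f at P is the indefinite nondegenerate matrix diag(−4, −2, 5/λ₀), so the zero set of f has a conical (Dirac) singularity at P. -/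
open Real

/-- derivative in the first variable -/
lemma graphyne_hderiv_x (y l x : ℝ) :
    HasDerivAt (fun x => graphyneDispersion x y l)
      (Real.sin x * (3 * Real.cos (Real.sqrt l) + Real.cos y)) x := by
  unfold graphyneDispersion
  have h := ((Real.hasDerivAt_cos x).add_const 1).mul_const
      (3 * Real.cos (Real.sqrt l) + Real.cos y)
  have h2 := (hasDerivAt_const x
      (9 * (Real.cos (Real.sqrt l)) ^ 3 - Real.cos (Real.sqrt l))).sub h
  refine h2.congr_deriv ?_
  ring

/-- derivative in the second variable -/
lemma graphyne_hderiv_y (l y : ℝ) :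
    HasDerivAt (fun y => graphyneDispersion 0 y l)
      ((Real.cos 0 + 1) * Real.sin y) y := by
  unfold graphyneDispersion
  have h := ((Real.hasDerivAt_cos y).const_add (3 * Real.cos (Real.sqrt l))).const_mul
      (Real.cos 0 + 1)
  have h2 := (hasDerivAt_const y
      (9 * (Real.cos (Real.sqrt l)) ^ 3 - Real.cos (Real.sqrt l))).sub h
  refine h2.congr_deriv ?_
  ring

/-- derivative of cos ∘ sqrt -/
lemma graphyne_hderiv_c {l : ℝ} (hl : l ≠ 0) :
    HasDerivAt (fun l => Real.cos (Real.sqrt l))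
      (-Real.sin (Real.sqrt l) * (2 * Real.sqrt l)⁻¹) l := by
  have := (Real.hasDerivAt_sqrt hl).cos
  simpa [one_div] using this

/-- the λ-derivative of the dispersion at θ₁ = 0, θ₂ = π -/
noncomputable def graphyneD (l : ℝ) : ℝ :=
  (27 * Real.cos (Real.sqrt l) ^ 2 - 7) *
    (-Real.sin (Real.sqrt l) * (2 * Real.sqrt l)⁻¹)

lemma graphyne_hderiv_l {l : ℝ} (hl : l ≠ 0) :
    HasDerivAt (fun l => graphyneDispersion 0 π l) (graphyneD l) l := by
  have hc := graphyne_hderiv_c hl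
  have h1 := (hc.pow 3).const_mul 9
  have h2 := ((hc.const_mul 3).add_const (Real.cos π)).const_mul (Real.cos 0 + 1)
  have h := (h1.sub hc).sub h2
  unfold graphyneDispersion
  refine h.congr_deriv ?_
  unfold graphyneD
  simp [Real.cos_zero, Real.cos_pi]
  ring

/-- At P = (0,π,((2k+1)π)²) the free dispersion function vanishes together with its
gradient, and its Hessian is the indefinite nondegenerate matrix diag(−4, −2, 5/lam0):
a conical (Dirac) singularity of the Bloch variety. -/
theorem graphyne_dirac_point_D_eq_neg_two (k : ℕ) (lam0 : ℝ)
    (hlam0 : lam0 = ((2 * (k : ℝ) + 1) * π) ^ 2) :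
    graphyneDispersion 0 π lam0 = 0 ∧
    deriv (fun x => graphyneDispersion x π lam0) 0 = 0 ∧
    deriv (fun y => graphyneDispersion 0 y lam0) π = 0 ∧
    deriv (fun l => graphyneDispersion 0 π l) lam0 = 0 ∧
    deriv (deriv (fun x => graphyneDispersion x π lam0)) 0 = -4 ∧
    deriv (deriv (fun y => graphyneDispersion 0 y lam0)) π = -2 ∧
    deriv (deriv (fun l => graphyneDispersion 0 π l)) lam0 = 5 / lam0 ∧
    deriv (fun y => deriv (fun x => graphyneDispersion x y lam0) 0) π = 0 ∧
    deriv (fun l => deriv (fun x => graphyneDispersion x π l) 0) lam0 = 0 ∧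
    deriv (fun l => deriv (fun y => graphyneDispersion 0 y l) π) lam0 = 0 ∧
    Matrix.det (Matrix.diagonal ![(-4 : ℝ), -2, 5 / lam0]) ≠ 0 ∧
    0 < 5 / lam0 := by
  set s0 : ℝ := (2 * (k : ℝ) + 1) * π with hs0
  have hs0pos : 0 < s0 := by positivity
  have hlam0pos : 0 < lam0 := by rw [hlam0]; positivity
  have hsqrt : Real.sqrt lam0 = s0 := by
    rw [hlam0]; exact Real.sqrt_sq hs0pos.le
  have hsin : Real.sin s0 = 0 := by
    have : s0 = ((2 * k + 1 : ℕ) : ℝ) * π := by push_cast [hs0]; ring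
    rw [this]; exact Real.sin_nat_mul_pi _
  have hcos : Real.cos s0 = -1 := by
    have : s0 = (k : ℝ) * (2 * π) + π := by rw [hs0]; ring
    rw [this]; exact Real.cos_nat_mul_two_pi_add_pi k
  refine ⟨?_, ?_, ?_, ?_, ?_, ?_, ?_, ?_, ?_, ?_, ?_, ?_⟩
  · unfold graphyneDispersion
    rw [hsqrt, hcos, Real.cos_zero, Real.cos_pi]
    ring
  · rw [(graphyne_hderiv_x π lam0 0).deriv]
    simp
  · rw [(graphyne_hderiv_y lam0 π).deriv]
    simp
  · rw [(graphyne_hderiv_l hlam0pos.ne').deriv]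
    unfold graphyneD
    rw [hsqrt, hsin]
    ring
  · have heq : deriv (fun x => graphyneDispersion x π lam0)
        = fun x => Real.sin x * (3 * Real.cos (Real.sqrt lam0) + Real.cos π) := by
      funext x; exact (graphyne_hderiv_x π lam0 x).deriv
    rw [heq, ((Real.hasDerivAt_sin 0).mul_const
        (3 * Real.cos (Real.sqrt lam0) + Real.cos π)).deriv]
    rw [hsqrt, hcos, Real.cos_pi, Real.cos_zero]
    ring
  · have heq : deriv (fun y => graphyneDispersion 0 y lam0)
        = fun y => (Real.cos 0 + 1) * Real.sin y := by
      funext y; exact (graphyne_hderiv_y lam0 y).deriv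
    rw [heq, ((Real.hasDerivAt_sin π).const_mul (Real.cos 0 + 1)).deriv]
    rw [Real.cos_pi, Real.cos_zero]
    ring
  · -- second λ-derivative
    have hev : deriv (fun l => graphyneDispersion 0 π l) =ᶠ[nhds lam0] graphyneD := by
      filter_upwards [eventually_gt_nhds hlam0pos] with l hl
      exact (graphyne_hderiv_l hl.ne').deriv
    rw [hev.deriv_eq]
    -- derivative of graphyneD at lam0
    have hc := graphyne_hderiv_c hlam0pos.ne'
    have hu : HasDerivAt (fun l => 27 * Real.cos (Real.sqrt l) ^ 2 - 7)
        (27 * ((2 : ℕ) * Real.cos (Real.sqrt lam0) ^ 1 *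
          (-Real.sin (Real.sqrt lam0) * (2 * Real.sqrt lam0)⁻¹))) lam0 :=
      ((hc.pow 2).const_mul 27).sub_const 7
    have ha : HasDerivAt (fun l => -Real.sin (Real.sqrt l))
        (-(Real.cos (Real.sqrt lam0) * (1 / (2 * Real.sqrt lam0)))) lam0 :=
      ((Real.hasDerivAt_sqrt hlam0pos.ne').sin).neg
    have hs2 : (2 : ℝ) * Real.sqrt lam0 ≠ 0 := by
      rw [hsqrt]; positivity
    have hb : HasDerivAt (fun l => (2 * Real.sqrt l)⁻¹)
        (-(2 * (1 / (2 * Real.sqrt lam0))) / (2 * Real.sqrt lam0) ^ 2) lam0 :=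
      ((Real.hasDerivAt_sqrt hlam0pos.ne').const_mul 2).inv hs2
    have hv := ha.mul hb
    have hD := hu.mul hv
    have hD' : HasDerivAt graphyneD (5 / lam0) lam0 := by
      refine hD.congr_deriv ?_
      rw [hsqrt, hsin, hcos]
      have hs0ne : s0 ≠ 0 := hs0pos.ne'
      have : s0 ^ 2 = lam0 := by rw [hlam0]
      field_simp
      nlinarith [sq_nonneg s0]
    exact hD'.deriv
  · have heq : (fun y => deriv (fun x => graphyneDispersion x y lam0) 0)
        = fun _ : ℝ => (0 : ℝ) := by
      funext y
      rw [(graphyne_hderiv_x y lam0 0).deriv]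
      simp
    rw [heq, deriv_const]
  · have heq : (fun l => deriv (fun x => graphyneDispersion x π l) 0)
        = fun _ : ℝ => (0 : ℝ) := by
      funext l
      rw [(graphyne_hderiv_x π l 0).deriv]
      simp
    rw [heq, deriv_const]
  · have heq : (fun l => deriv (fun y => graphyneDispersion 0 y l) π)
        = fun _ : ℝ => (0 : ℝ) := by
      funext l
      rw [(graphyne_hderiv_y l π).deriv]
      simp
    rw [heq, deriv_const]
  · rw [Matrix.det_diagonal]
    simp [Fin.prod_univ_three]
    exact hlam0pos.ne'
  · positivity
end

section
/- Let θ₀ = arccos(−1/3), k ∈ ℕ, λ₀ = (θ₀ + 2kπ)², and define f : ℝ³ → ℝ by f(θ₁,θ₂,λ) = 9cos³(√λ) − cos(√λ) − (cos θ₁ + 1)(3cos(√λ) + cos θ₂), where √λ denotes Real.sqrt λ. Then at the point P = (θ₀, 0, λ₀): f(P) = 0; all three first partial derivatives of f vanish at P; and the second partial derivatives at P are ∂²f/∂θ₁² = 0, ∂²f/∂θ₂² = 2/3, ∂²f/∂λ² = −4/λ₀, ∂²f/∂θ₁∂λ = −4/(3√λ₀), ∂²f/∂θ₁∂θ₂ =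 ∂²f/∂θ₂∂λ = 0. In particular the Hessian of f at P has determinant −32/(27λ₀) ≠ 0, so it is nondegenerate and indefinite and the zero set of f has a conical (Dirac) singularity at P. -/
open Real

/-- At P = (θ₀,0,(θ₀+2kπ)²), θ₀ = arccos(−1/3), the free dispersion function vanishes
together with its gradient; its Hessian has the stated entries and determinant
−32/(27lam0) ≠ 0, so it is nondegenerate (a stable conical Dirac singularity). -/
theorem graphyne_dirac_point_D_eq_neg_two_thirds (k : ℕ) (θ₀ lam0 : ℝ)
    (hθ₀ : θ₀ = Real.arccos (-(1/3))) (hlam0 : lam0 = (θ₀ + 2 * (k : ℝ) * π) ^ 2) :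
    graphyneDispersion θ₀ 0 lam0 = 0 ∧
    deriv (fun x => graphyneDispersion x 0 lam0) θ₀ = 0 ∧
    deriv (fun y => graphyneDispersion θ₀ y lam0) 0 = 0 ∧
    deriv (fun l => graphyneDispersion θ₀ 0 l) lam0 = 0 ∧
    deriv (deriv (fun x => graphyneDispersion x 0 lam0)) θ₀ = 0 ∧
    deriv (deriv (fun y => graphyneDispersion θ₀ y lam0)) 0 = 2/3 ∧
    deriv (deriv (fun l => graphyneDispersion θ₀ 0 l)) lam0 = -4 / lam0 ∧
    deriv (fun l => deriv (fun x => graphyneDispersion x 0 l) θ₀) lam0 =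
      -4 / (3 * Real.sqrt lam0) ∧
    deriv (fun y => deriv (fun x => graphyneDispersion x y lam0) θ₀) 0 = 0 ∧
    deriv (fun l => deriv (fun y => graphyneDispersion θ₀ y l) 0) lam0 = 0 ∧
    Matrix.det !![(0 : ℝ), 0, -4 / (3 * Real.sqrt lam0);
                  0, 2/3, 0;
                  -4 / (3 * Real.sqrt lam0), 0, -4 / lam0] = -32 / (27 * lam0) ∧
    (-32 / (27 * lam0) : ℝ) ≠ 0 := by
  have hc0 : Real.cos θ₀ = -(1/3) := by
    rw [hθ₀]; exact Real.cos_arccos (by norm_num) (by norm_num)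
  have hθpos : 0 < θ₀ := by rw [hθ₀]; exact Real.arccos_pos.2 (by norm_num)
  have htpos : 0 < θ₀ + 2 * (k : ℝ) * π := by positivity
  have hst : Real.sqrt lam0 = θ₀ + 2 * (k : ℝ) * π := by
    rw [hlam0]; exact Real.sqrt_sq htpos.le
  have hct : Real.cos (Real.sqrt lam0) = -(1/3) := by
    rw [hst, show θ₀ + 2 * (k : ℝ) * π = θ₀ + k * (2*π) by ring,
      Real.cos_add_nat_mul_two_pi, hc0]
  have h2 : Real.sqrt 2 ^ 2 = 2 := Real.sq_sqrt (by norm_num)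
  have hsθ : Real.sin θ₀ = 2 * Real.sqrt 2 / 3 := by
    rw [hθ₀, Real.sin_arccos,
      show (1:ℝ) - (-(1/3))^2 = (2 * Real.sqrt 2 / 3)^2 by nlinarith [h2]]
    exact Real.sqrt_sq (by positivity)
  have hstt : Real.sin (Real.sqrt lam0) = 2 * Real.sqrt 2 / 3 := by
    rw [hst, show θ₀ + 2 * (k : ℝ) * π = θ₀ + k * (2*π) by ring,
      Real.sin_add_nat_mul_two_pi, hsθ]
  have hlpos : 0 < lam0 := by rw [hlam0]; positivity
  have hlne : lam0 ≠ 0 := hlpos.ne'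
  have hsqne : Real.sqrt lam0 ≠ 0 := by rw [hst]; exact htpos.ne'
  have hmul : Real.sqrt lam0 * Real.sqrt lam0 = lam0 := Real.mul_self_sqrt hlpos.le
  -- derivative in the first variable
  have hDx : ∀ (y l x : ℝ), HasDerivAt (fun x => graphyneDispersion x y l)
      (Real.sin x * (3 * Real.cos (Real.sqrt l) + Real.cos y)) x := by
    intro y l x
    have h := (((Real.hasDerivAt_cos x).add_const 1).mul_const
        (3 * Real.cos (Real.sqrt l) + Real.cos y)).const_sub
        (9 * Real.cos (Real.sqrt l) ^ 3 - Real.cos (Real.sqrt l))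
    simp only [graphyneDispersion]
    exact h.congr_deriv (by ring)
  -- derivative in the second variable
  have hDy : ∀ (θ l y : ℝ), HasDerivAt (fun y => graphyneDispersion θ y l)
      ((Real.cos θ + 1) * Real.sin y) y := by
    intro θ l y
    have h := (((Real.hasDerivAt_cos y).const_add
        (3 * Real.cos (Real.sqrt l))).const_mul (Real.cos θ + 1)).const_sub
        (9 * Real.cos (Real.sqrt l) ^ 3 - Real.cos (Real.sqrt l))
    simp only [graphyneDispersion]
    exact h.congr_deriv (by ring)
  -- derivative of cos ∘ sqrt and sin ∘ sqrt
  have hg : ∀ l : ℝ, l ≠ 0 → HasDerivAt (fun l => Real.cos (Real.sqrt l))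
      (-Real.sin (Real.sqrt l) * (1 / (2 * Real.sqrt l))) l := by
    intro l hl
    exact ((Real.hasDerivAt_cos (Real.sqrt l)).comp l (Real.hasDerivAt_sqrt hl)).congr_deriv
      (by ring)
  have hgs : HasDerivAt (fun l => Real.sin (Real.sqrt l))
      (Real.cos (Real.sqrt lam0) * (1 / (2 * Real.sqrt lam0))) lam0 := by
    exact ((Real.hasDerivAt_sin (Real.sqrt lam0)).comp lam0
      (Real.hasDerivAt_sqrt hlne)).congr_deriv (by ring)
  -- derivative in the third variable
  have hDl : ∀ l : ℝ, l ≠ 0 → HasDerivAt (fun l => graphyneDispersion θ₀ 0 l)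
      ((27 * Real.cos (Real.sqrt l) ^ 2 - 3) *
        (-Real.sin (Real.sqrt l) * (1 / (2 * Real.sqrt l)))) l := by
    intro l hl
    have h := (hg l hl)
    have H := (((h.pow 3).const_mul 9).sub h).sub
      (((h.const_mul 3).add_const (Real.cos 0)).const_mul (Real.cos θ₀ + 1))
    simp only [graphyneDispersion]
    exact H.congr_deriv (by rw [hc0]; ring)
  have hzero : 3 * Real.cos (Real.sqrt lam0) + Real.cos 0 = 0 := by
    rw [hct, Real.cos_zero]; ring
  refine ⟨?_, ?_, ?_, ?_, ?_, ?_, ?_, ?_, ?_, ?_, ?_, ?_⟩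
  · simp only [graphyneDispersion, hct, hc0, Real.cos_zero]; ring
  · rw [(hDx 0 lam0 θ₀).deriv, hzero, mul_zero]
  · rw [(hDy θ₀ lam0 0).deriv, Real.sin_zero, mul_zero]
  · rw [(hDl lam0 hlne).deriv, hct]; norm_num
  · have : deriv (fun x => graphyneDispersion x 0 lam0) = fun _ => (0:ℝ) := by
      funext x; rw [(hDx 0 lam0 x).deriv, hzero, mul_zero]
    rw [this, deriv_const']
  · have : deriv (fun y => graphyneDispersion θ₀ y lam0)
        = fun y => (Real.cos θ₀ + 1) * Real.sin y := by
      funext y; exact (hDy θ₀ lam0 y).deriv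
    rw [this, ((Real.hasDerivAt_sin 0).const_mul (Real.cos θ₀ + 1)).deriv,
      Real.cos_zero, hc0]
    norm_num
  · -- second derivative in λ
    have hev : deriv (fun l => graphyneDispersion θ₀ 0 l) =ᶠ[nhds lam0]
        (fun l => (27 * Real.cos (Real.sqrt l) ^ 2 - 3) *
          (-Real.sin (Real.sqrt l) * (2 * Real.sqrt l)⁻¹)) := by
      filter_upwards [eventually_ne_nhds hlne] with l hl
      rw [(hDl l hl).deriv, one_div]
    rw [hev.deriv_eq]
    have hsq := Real.hasDerivAt_sqrt hlne
    have hcosl := hg lam0 hlne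
    have hA := ((hcosl.pow 2).const_mul 27).sub_const 3
    have hinv := (hsq.const_mul 2).inv (by positivity : 2 * Real.sqrt lam0 ≠ 0)
    have hB := hgs.neg.mul hinv
    have hF := hA.mul hB
    rw [HasDerivAt.deriv (f := fun l => (27 * Real.cos (Real.sqrt l) ^ 2 - 3) *
        (-Real.sin (Real.sqrt l) * (2 * Real.sqrt l)⁻¹)) hF]
    simp only [Pi.mul_apply, Pi.neg_apply, Pi.inv_apply, Pi.pow_apply]
    rw [hct, hstt, show lam0 = Real.sqrt lam0 * Real.sqrt lam0 from hmul.symm]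
    field_simp
    ring_nf
    rw [h2, Real.sqrt_sq (Real.sqrt_nonneg lam0)]
    ring
  · -- mixed θ₁-λ
    have : (fun l => deriv (fun x => graphyneDispersion x 0 l) θ₀)
        = fun l => Real.sin θ₀ * (3 * Real.cos (Real.sqrt l) + Real.cos 0) := by
      funext l; exact (hDx 0 l θ₀).deriv
    rw [this]
    have h := (((hg lam0 hlne).const_mul 3).add_const (Real.cos 0)).const_mul
      (Real.sin θ₀)
    rw [h.deriv, hsθ, hstt, hst]
    field_simp
    nlinarith [h2, Real.sqrt_nonneg 2, htpos]
  · -- mixed θ₁-θ₂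
    have : (fun y => deriv (fun x => graphyneDispersion x y lam0) θ₀)
        = fun y => Real.sin θ₀ * (3 * Real.cos (Real.sqrt lam0) + Real.cos y) := by
      funext y; exact (hDx y lam0 θ₀).deriv
    rw [this]
    have h := ((Real.hasDerivAt_cos 0).const_add
      (3 * Real.cos (Real.sqrt lam0))).const_mul (Real.sin θ₀)
    rw [h.deriv, Real.sin_zero]
    ring
  · -- mixed θ₂-λ
    have : (fun l => deriv (fun y => graphyneDispersion θ₀ y l) 0) = fun _ => (0:ℝ) := by
      funext l; rw [(hDy θ₀ l 0).deriv, Real.sin_zero, mul_zero]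
    rw [this, deriv_const']
  · rw [Matrix.det_fin_three]
    norm_num [Matrix.cons_val_zero, Matrix.cons_val_one, Matrix.head_cons, Matrix.cons_val_two,
      Matrix.tail_cons]
    rw [show lam0 = Real.sqrt lam0 * Real.sqrt lam0 from hmul.symm]
    field_simp
    ring_nf
    rw [Real.sq_sqrt hlpos.le]
    rw [Real.sq_sqrt hlpos.le]
  · intro h
    have := div_eq_zero_iff.mp h
    rcases this with h | h
    · norm_num at h
    · exact hlne (by linarith [mul_eq_zero.mp h |>.resolve_left (by norm_num)])
end

section
/- Let θ₀ = arccos(−1/3), k ∈ ℕ, λ₀ = (π − θ₀ + 2kπ)², and define f : ℝ³ → ℝ by f(θ₁,θ₂,λ) = 9cos³(√λ) − cos(√λ) − (cos θ₁ + 1)(3cos(√λ) + cos θ₂), where √λ denotes Real.sqrt λ. Then at the point P = (θ₀, π, λ₀): f(P) = 0; all three first partial derivatives of f vanish at P; and the second partial derivatives at P are ∂²f/∂θ₁² = 0, ∂²f/∂θ₂² = −2/3, ∂²f/∂λ² = 4/λ₀, ∂²f/∂θ₁∂λ = −4/(3√λ₀), ∂²f/∂θ₁∂θ₂ = ∂²f/∂θ₂∂λ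 = 0. In particular the Hessian of f at P has determinant 32/(27λ₀) ≠ 0, so it is nondegenerate and indefinite and the zero set of f has a conical (Dirac) singularity at P. -/
set_option maxHeartbeats 1000000


open Real

/-- At P = (θ₀,π,(π−θ₀+2kπ)²), θ₀ = arccos(−1/3), the free dispersion function vanishes
together with its gradient; its Hessian has the stated entries and determinant
32/(27lam0) ≠ 0, so it is nondegenerate (a stable conical Dirac singularity). -/
theorem graphyne_dirac_point_D_eq_two_thirds (k : ℕ) (θ₀ lam0 : ℝ)
    (hθ₀ : θ₀ = Real.arccos (-(1/3))) (hlam0 : lam0 = (π - θ₀ + 2 * (k : ℝ) * π) ^ 2) :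
    graphyneDispersion θ₀ π lam0 = 0 ∧
    deriv (fun x => graphyneDispersion x π lam0) θ₀ = 0 ∧
    deriv (fun y => graphyneDispersion θ₀ y lam0) π = 0 ∧
    deriv (fun l => graphyneDispersion θ₀ π l) lam0 = 0 ∧
    deriv (deriv (fun x => graphyneDispersion x π lam0)) θ₀ = 0 ∧
    deriv (deriv (fun y => graphyneDispersion θ₀ y lam0)) π = -(2/3) ∧
    deriv (deriv (fun l => graphyneDispersion θ₀ π l)) lam0 = 4 / lam0 ∧
    deriv (fun l => deriv (fun x => graphyneDispersion x π l) θ₀) lam0 =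
      -4 / (3 * Real.sqrt lam0) ∧
    deriv (fun y => deriv (fun x => graphyneDispersion x y lam0) θ₀) π = 0 ∧
    deriv (fun l => deriv (fun y => graphyneDispersion θ₀ y l) π) lam0 = 0 ∧
    Matrix.det !![(0 : ℝ), 0, -4 / (3 * Real.sqrt lam0);
                  0, -(2/3), 0;
                  -4 / (3 * Real.sqrt lam0), 0, 4 / lam0] = 32 / (27 * lam0) ∧
    (32 / (27 * lam0) : ℝ) ≠ 0 := by
  have h2 : Real.sqrt 2 ^ 2 = 2 := Real.sq_sqrt (by norm_num)
  have h13 : Real.cos θ₀ = -(1/3) := by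
    rw [hθ₀]; exact Real.cos_arccos (by norm_num) (by norm_num)
  have hsin0 : Real.sin θ₀ = 2 * Real.sqrt 2 / 3 := by
    rw [hθ₀, Real.sin_arccos]
    rw [show (1:ℝ) - (-(1/3))^2 = (2 * Real.sqrt 2 / 3)^2 by
      rw [div_pow, mul_pow, h2]; norm_num]
    exact Real.sqrt_sq (by positivity)
  set s : ℝ := π - θ₀ + 2 * (k : ℝ) * π with hs_def
  have hθ₀lt : θ₀ < π := by
    refine lt_of_le_of_ne (hθ₀ ▸ Real.arccos_le_pi _) ?_
    rw [hθ₀, ne_eq, Real.arccos_eq_pi]; norm_num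
  have hkn : (0:ℝ) ≤ (k:ℝ) := Nat.cast_nonneg k
  have hspos : 0 < s := by
    have := Real.pi_pos; nlinarith
  have hsq : Real.sqrt lam0 = s := by rw [hlam0]; exact Real.sqrt_sq hspos.le
  have hlampos : 0 < lam0 := by rw [hlam0]; exact pow_pos hspos 2
  have hl2 : lam0 = s ^ 2 := hlam0
  have hcoss : Real.cos s = 1/3 := by
    have e : s = (π - θ₀) + (k : ℤ) * (2 * π) := by push_cast; ring
    rw [e, Real.cos_add_int_mul_two_pi, Real.cos_pi_sub, h13]; norm_num
  have hsins : Real.sin s = 2 * Real.sqrt 2 / 3 := by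
    have e : s = (π - θ₀) + (k : ℤ) * (2 * π) := by push_cast; ring
    rw [e, Real.sin_add_int_mul_two_pi, Real.sin_pi_sub, hsin0]
  -- derivative of cos ∘ sqrt
  have hcderiv : ∀ l : ℝ, 0 < l → HasDerivAt (fun t => Real.cos (Real.sqrt t))
      (-Real.sin (Real.sqrt l) * (1/(2*Real.sqrt l))) l := fun l hl =>
    (Real.hasDerivAt_cos (Real.sqrt l)).comp l (Real.hasDerivAt_sqrt hl.ne')
  -- (1) value
  have part1 : graphyneDispersion θ₀ π lam0 = 0 := by
    simp only [graphyneDispersion, hsq, hcoss, Real.cos_pi, h13]; norm_num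
  -- θ₁ direction: the function is identically 0
  have hfun1 : (fun x => graphyneDispersion x π lam0) = fun _ => (0:ℝ) := by
    funext x
    simp only [graphyneDispersion, hsq, hcoss, Real.cos_pi]; ring
  have part2 : deriv (fun x => graphyneDispersion x π lam0) θ₀ = 0 := by
    rw [hfun1]; simp
  have part5 : deriv (deriv (fun x => graphyneDispersion x π lam0)) θ₀ = 0 := by
    rw [hfun1]; simp
  -- θ₂ direction
  have hfun2 : (fun y => graphyneDispersion θ₀ y lam0) = fun y => -(2/3) * (1 + Real.cos y) := by
    funext y
    simp only [graphyneDispersion, hsq, hcoss, h13]; ring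
  have hd2 : deriv (fun y => -(2/3 : ℝ) * (1 + Real.cos y)) = fun y => (2/3) * Real.sin y := by
    funext y
    have h := ((Real.hasDerivAt_cos y).const_add (1:ℝ)).const_mul (-(2/3):ℝ)
    rw [h.deriv]; ring
  have part3 : deriv (fun y => graphyneDispersion θ₀ y lam0) π = 0 := by
    rw [hfun2, hd2]; simp
  have part6 : deriv (deriv (fun y => graphyneDispersion θ₀ y lam0)) π = -(2/3) := by
    rw [hfun2, hd2]
    rw [((Real.hasDerivAt_sin π).const_mul ((2:ℝ)/3)).deriv, Real.cos_pi]; norm_num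
  -- λ direction
  have hfun3 : (fun l => graphyneDispersion θ₀ π l)
      = fun l => 9 * (Real.cos (Real.sqrt l))^3 - 3 * Real.cos (Real.sqrt l) + 2/3 := by
    funext l
    simp only [graphyneDispersion, h13, Real.cos_pi]; ring
  set G : ℝ → ℝ := fun l => (27 * (Real.cos (Real.sqrt l))^2 - 3) *
      (-Real.sin (Real.sqrt l) * (2 * Real.sqrt l)⁻¹) with hG_def
  have hg : ∀ l : ℝ, 0 < l → HasDerivAt
      (fun l => 9 * (Real.cos (Real.sqrt l))^3 - 3 * Real.cos (Real.sqrt l) + 2/3) (G l) l := by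
    intro l hl
    have hc := hcderiv l hl
    have h := (((hc.pow 3).const_mul (9:ℝ)).sub (hc.const_mul 3)).add_const (2/3 : ℝ)
    refine h.congr_deriv ?_
    simp only [hG_def]; push_cast; ring
  have part4 : deriv (fun l => graphyneDispersion θ₀ π l) lam0 = 0 := by
    rw [hfun3, (hg lam0 hlampos).deriv, hG_def]
    simp only [hsq, hcoss]; norm_num
  -- second derivative in λ
  have part7 : deriv (deriv (fun l => graphyneDispersion θ₀ π l)) lam0 = 4 / lam0 := by
    rw [hfun3]
    have hev : deriv (fun l => 9 * (Real.cos (Real.sqrt l))^3 - 3 * Real.cos (Real.sqrt l) + 2/3)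
        =ᶠ[nhds lam0] G := by
      filter_upwards [isOpen_Ioi.mem_nhds hlampos] with l hl using (hg l hl).deriv
    rw [hev.deriv_eq]
    have hw : HasDerivAt Real.sqrt (1/(2*Real.sqrt lam0)) lam0 := Real.hasDerivAt_sqrt hlampos.ne'
    have hc := hcderiv lam0 hlampos
    have hsn : HasDerivAt (fun l => Real.sin (Real.sqrt l))
        (Real.cos (Real.sqrt lam0) * (1/(2*Real.sqrt lam0))) lam0 :=
      (Real.hasDerivAt_sin (Real.sqrt lam0)).comp lam0 hw
    have h2w : HasDerivAt (fun l => 2 * Real.sqrt l) (2 * (1/(2*Real.sqrt lam0))) lam0 :=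
      hw.const_mul 2
    have hne : 2 * Real.sqrt lam0 ≠ 0 := by rw [hsq]; positivity
    have hinv := h2w.inv hne
    have hA : HasDerivAt (fun l => 27 * (Real.cos (Real.sqrt l))^2 - 3)
        (27 * ((2:ℕ) * (Real.cos (Real.sqrt lam0))^1 * (-Real.sin (Real.sqrt lam0) * (1/(2*Real.sqrt lam0))))) lam0 :=
      ((hc.pow 2).const_mul 27).sub_const 3
    have hB := (hsn.neg).mul hinv
    have hGd := hA.mul hB
    rw [show deriv G lam0 = _ from hGd.deriv]
    simp only [Pi.mul_apply, Pi.neg_apply, Pi.inv_apply]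
    rw [hsq, hcoss, hsins, hl2]
    have hs2 : Real.sqrt 2 * Real.sqrt 2 = 2 := Real.mul_self_sqrt (by norm_num)
    field_simp
    ring_nf
    rw [show Real.sqrt 2 ^ 2 = 2 from h2]
    ring
  -- mixed θ₁–λ
  have hfun4 : ∀ l : ℝ, deriv (fun x => graphyneDispersion x π l) θ₀
      = Real.sin θ₀ * (3 * Real.cos (Real.sqrt l) - 1) := by
    intro l
    have h : HasDerivAt (fun x => graphyneDispersion x π l)
        (Real.sin θ₀ * (3 * Real.cos (Real.sqrt l) - 1)) θ₀ := by
      have h0 := (((Real.hasDerivAt_cos θ₀).add_const (1:ℝ)).mul_const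
          (3 * Real.cos (Real.sqrt l) + Real.cos π)).const_sub
          (9 * (Real.cos (Real.sqrt l))^3 - Real.cos (Real.sqrt l))
      refine h0.congr_deriv ?_
      rw [Real.cos_pi]; ring
    exact h.deriv
  have part8 : deriv (fun l => deriv (fun x => graphyneDispersion x π l) θ₀) lam0
      = -4 / (3 * Real.sqrt lam0) := by
    have e : (fun l => deriv (fun x => graphyneDispersion x π l) θ₀)
        = fun l => Real.sin θ₀ * (3 * Real.cos (Real.sqrt l) - 1) := funext hfun4
    rw [e]
    have hD := (((hcderiv lam0 hlampos).const_mul 3).sub_const 1).const_mul (Real.sin θ₀)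
    rw [hD.deriv, hsq, hsins, hsin0]
    have hs2 : Real.sqrt 2 * Real.sqrt 2 = 2 := Real.mul_self_sqrt (by norm_num)
    field_simp
    ring_nf
    rw [show Real.sqrt 2 ^ 2 = 2 from h2]
    ring
  -- mixed θ₁–θ₂
  have hfun5 : ∀ y : ℝ, deriv (fun x => graphyneDispersion x y lam0) θ₀
      = Real.sin θ₀ * (3 * Real.cos (Real.sqrt lam0) + Real.cos y) := by
    intro y
    have h : HasDerivAt (fun x => graphyneDispersion x y lam0)
        (Real.sin θ₀ * (3 * Real.cos (Real.sqrt lam0) + Real.cos y)) θ₀ := by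
      have h0 := (((Real.hasDerivAt_cos θ₀).add_const (1:ℝ)).mul_const
          (3 * Real.cos (Real.sqrt lam0) + Real.cos y)).const_sub
          (9 * (Real.cos (Real.sqrt lam0))^3 - Real.cos (Real.sqrt lam0))
      refine h0.congr_deriv ?_
      ring
    exact h.deriv
  have part9 : deriv (fun y => deriv (fun x => graphyneDispersion x y lam0) θ₀) π = 0 := by
    have e : (fun y => deriv (fun x => graphyneDispersion x y lam0) θ₀)
        = fun y => Real.sin θ₀ * (3 * Real.cos (Real.sqrt lam0) + Real.cos y) := funext hfun5
    rw [e]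
    have hD := ((Real.hasDerivAt_cos π).const_add (3 * Real.cos (Real.sqrt lam0))).const_mul (Real.sin θ₀)
    rw [hD.deriv]; simp
  -- mixed θ₂–λ
  have hfun6 : ∀ l : ℝ, deriv (fun y => graphyneDispersion θ₀ y l) π = 0 := by
    intro l
    have h : HasDerivAt (fun y => graphyneDispersion θ₀ y l)
        (-((Real.cos θ₀ + 1) * (-Real.sin π))) π := by
      exact (((Real.hasDerivAt_cos π).const_add (3 * Real.cos (Real.sqrt l))).const_mul
        (Real.cos θ₀ + 1)).const_sub (9 * (Real.cos (Real.sqrt l))^3 - Real.cos (Real.sqrt l))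
    rw [h.deriv]; simp
  have part10 : deriv (fun l => deriv (fun y => graphyneDispersion θ₀ y l) π) lam0 = 0 := by
    have e : (fun l => deriv (fun y => graphyneDispersion θ₀ y l) π) = fun _ => (0:ℝ) :=
      funext hfun6
    rw [e]; simp
  -- determinant
  have hms : Real.sqrt lam0 * Real.sqrt lam0 = lam0 := Real.mul_self_sqrt hlampos.le
  have part11 : Matrix.det !![(0 : ℝ), 0, -4 / (3 * Real.sqrt lam0);
                  0, -(2/3), 0;
                  -4 / (3 * Real.sqrt lam0), 0, 4 / lam0] = 32 / (27 * lam0) := by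
    have hsne : Real.sqrt lam0 ≠ 0 := by rw [hsq]; exact hspos.ne'
    simp [Matrix.det_fin_three]
    field_simp
    nlinarith [hms, hlampos]
  exact ⟨part1, part2, part3, part4, part5, part6, part7, part8, part9, part10, part11,
    by positivity⟩
end

section
/- Let q : ℝ → ℝ be continuous with q(x) = q(1−x) for all x ∈ [0,1], let λ ∈ ℝ, and let u be twice continuously differentiable on [0,1], not identically zero, with −u'' + q·u = λ·u on [0,1] and u(0) = u(1) = 0 (a Dirichlet eigenfunction). Then there exists a twice continuously differentiable ψ on [0,1], not identically zero, satisfying −ψ'' + q·ψ = λ·ψ on [0,1] and either the periodic boundary conditions ψ(1) = ψ(0) and ψ'(1) = ψ'(0), or the antiperiodic boundary conditions ψ(1) = −ψ(0) and ψ'(1) = −ψ'(0). (One may take ψ = u − u∘(1−·) or ψ = u + u∘(1−·).) Hence every Dirichlet eigenvalue of −d²/dx² + q with even q is a periodic or antiperiodic eigenvalue, i.e., it lies at an edge of a spectral gap of the associated Hill operator. -/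
lemma deriv_one_sub (f : ℝ → ℝ) (hf : Differentiable ℝ f) :
    deriv (fun y => f (1 - y)) = fun x => -(deriv f (1 - x)) := by
  funext x
  have h1 : HasDerivAt (fun y : ℝ => 1 - y) (-1) x := by
    simpa using (hasDerivAt_id x).const_sub 1
  have h2 : HasDerivAt (fun y => f (1 - y)) (deriv f (1 - x) * (-1)) x :=
    (hf (1 - x)).hasDerivAt.comp x h1
  simpa using h2.deriv

lemma contDiff_one_sub (f : ℝ → ℝ) {n : ℕ} (hf : ContDiff ℝ n f) :
    ContDiff ℝ n (fun y => f (1 - y)) :=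
  hf.comp (contDiff_const.sub contDiff_id)

lemma deriv2_one_sub (f : ℝ → ℝ) (hf : ContDiff ℝ 2 f) :
    deriv (deriv (fun y => f (1 - y))) = fun x => deriv (deriv f) (1 - x) := by
  have hf1 : Differentiable ℝ f := hf.differentiable (by norm_num)
  have hf' : Differentiable ℝ (deriv f) :=
    (hf.iterate_deriv' 1 1).differentiable (by norm_num)
  rw [deriv_one_sub f hf1]
  funext x
  have hn : deriv (fun x => -(deriv f (1 - x))) x
      = -(deriv (fun x => deriv f (1 - x)) x) := deriv.neg
  rw [hn, deriv_one_sub (deriv f) hf']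
  simp

/-- For an even potential q on [0,1], every Dirichlet eigenfunction u of −d²/dx² + q
at energy λ produces (as u ± u∘(1−·)) a nonzero solution ψ of the same equation
satisfying periodic or antiperiodic boundary conditions; hence every Dirichlet
eigenvalue is a periodic or antiperiodic eigenvalue of the Hill operator. -/
theorem hill_dirichlet_eigenvalue_is_band_edge (q : ℝ → ℝ) (hq : Continuous q)
    (hqsym : ∀ x ∈ Set.Icc (0 : ℝ) 1, q x = q (1 - x)) (lam : ℝ)
    (u : ℝ → ℝ) (hu : ContDiff ℝ 2 u)
    (hune : ¬ ∀ x ∈ Set.Icc (0 : ℝ) 1, u x = 0)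
    (hode : ∀ x ∈ Set.Icc (0 : ℝ) 1, -(deriv (deriv u) x) + q x * u x = lam * u x)
    (h0 : u 0 = 0) (h1 : u 1 = 0) :
    ∃ ψ : ℝ → ℝ, ContDiff ℝ 2 ψ ∧ (¬ ∀ x ∈ Set.Icc (0 : ℝ) 1, ψ x = 0) ∧
      (∀ x ∈ Set.Icc (0 : ℝ) 1, -(deriv (deriv ψ) x) + q x * ψ x = lam * ψ x) ∧
      ((ψ 1 = ψ 0 ∧ deriv ψ 1 = deriv ψ 0) ∨
       (ψ 1 = -ψ 0 ∧ deriv ψ 1 = -deriv ψ 0)) := by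
  set v : ℝ → ℝ := fun x => u (1 - x) with hv
  have hvc : ContDiff ℝ 2 v := contDiff_one_sub u hu
  have hu1 : Differentiable ℝ u := hu.differentiable (by norm_num)
  have hv1 : Differentiable ℝ v := hvc.differentiable (by norm_num)
  have hu'd : Differentiable ℝ (deriv u) :=
    (hu.iterate_deriv' 1 1).differentiable (by norm_num)
  have hv'd : Differentiable ℝ (deriv v) :=
    (hvc.iterate_deriv' 1 1).differentiable (by norm_num)
  have hvder : deriv v = fun x => -(deriv u (1 - x)) := deriv_one_sub u hu1
  have hvder2 : deriv (deriv v) = fun x => deriv (deriv u) (1 - x) := deriv2_one_sub u hu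
  have hmem : ∀ x ∈ Set.Icc (0 : ℝ) 1, (1 - x) ∈ Set.Icc (0 : ℝ) 1 := by
    rintro x ⟨hx0, hx1⟩; constructor <;> linarith
  have hodev : ∀ x ∈ Set.Icc (0 : ℝ) 1, -(deriv (deriv v) x) + q x * v x = lam * v x := by
    intro x hx
    rw [hvder2]
    simp only [hv]
    rw [hqsym x hx]
    exact hode (1 - x) (hmem x hx)
  -- boundary values
  have hv0 : v 0 = 0 := by simp [hv, h1]
  have hv1' : v 1 = 0 := by simp [hv, h0]
  by_cases hcase : ∀ x ∈ Set.Icc (0 : ℝ) 1, u x - v x = 0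
  · -- u symmetric; take ψ = u + v, antiperiodic
    refine ⟨fun x => u x + v x, hu.add hvc, ?_, ?_, Or.inr ?_⟩
    · intro hall
      apply hune
      intro x hx
      have h1 := hall x hx
      have h2 := hcase x hx
      simp only at h1
      linarith
    · intro x hx
      have hd : deriv (fun x => u x + v x) = fun x => deriv u x + deriv v x := by
        funext y; exact deriv_add (hu1 y) (hv1 y)
      rw [hd]
      have hd2 : deriv (fun x => deriv u x + deriv v x) x
          = deriv (deriv u) x + deriv (deriv v) x := deriv_add (hu'd x) (hv'd x)
      rw [hd2]
      have e1 := hode x hx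
      have e2 := hodev x hx
      simp only at e1 e2 ⊢
      ring_nf
      ring_nf at e1 e2
      linarith
    · have hd : deriv (fun x => u x + v x) = fun x => deriv u x + deriv v x := by
        funext y; exact deriv_add (hu1 y) (hv1 y)
      rw [hd]
      simp only [hvder]
      constructor
      · simp [hv, h0, h1]
      · simp
  · -- take ψ = u - v, periodic
    refine ⟨fun x => u x - v x, hu.sub hvc, hcase, ?_, Or.inl ?_⟩
    · intro x hx
      have hd : deriv (fun x => u x - v x) = fun x => deriv u x - deriv v x := by
        funext y; exact deriv_sub (hu1 y) (hv1 y)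
      rw [hd]
      have hd2 : deriv (fun x => deriv u x - deriv v x) x
          = deriv (deriv u) x - deriv (deriv v) x := deriv_sub (hu'd x) (hv'd x)
      rw [hd2]
      have e1 := hode x hx
      have e2 := hodev x hx
      simp only at e1 e2 ⊢
      linarith [mul_sub (q x) (u x) (v x), mul_sub lam (u x) (v x)]
    · have hd : deriv (fun x => u x - v x) = fun x => deriv u x - deriv v x := by
        funext y; exact deriv_sub (hu1 y) (hv1 y)
      rw [hd]
      simp only [hvder]
      constructor
      · simp [hv, h0, h1]
      · simp
        ring
end
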